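/- arXiv:2001.10476 — 5 statements merged into one kernel-verified Lean document; each statement's English description precedes it below -/
import Mathlib

section
/- If 0 < α ≤ 1/15000 and 5/2 + 2α ≤ p ≤ 3 + 2α, then condition (C) holds: ∫₀¹ I_t((2+α)/p, 1−(2+α)/p) t^{2p−4α−5}(1−t⁴)^α dt − 1/(4(α+1)) ≤ 0. -/
open MeasureTheory intervalIntegral

/-- The Beta function `B(x,y) = ∫₀¹ t^(x-1) (1-t)^(y-1) dt`. -/
noncomputable def betaFn (x y : ℝ) : ℝ :=
  ∫ t in (0:ℝ)..1, t ^ (x - 1) * (1 - t) ^ (y - 1)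

/-- The incomplete Beta function `B_T(x,y) = ∫₀^T s^(x-1) (1-s)^(y-1) ds`. -/
noncomputable def betaInc (T x y : ℝ) : ℝ :=
  ∫ s in (0:ℝ)..T, s ^ (x - 1) * (1 - s) ^ (y - 1)

/-- The regularized incomplete Beta function `I_T(x,y) = B_T(x,y)/B(x,y)`. -/
noncomputable def betaReg (T x y : ℝ) : ℝ := betaInc T x y / betaFn x y

/-- Generalized binomial coefficient `binom(α,k) = α(α-1)⋯(α-k+1)/k!`. -/
noncomputable def gBinom (α : ℝ) (k : ℕ) : ℝ :=
  (∏ i ∈ Finset.range k, (α - i)) / (Nat.factorial k)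

/-- `ψ_{α,p}(t) = t^((2+α)/p - 1) (1-t)^(-(2+α)/p)`. -/
noncomputable def psiFn (α p t : ℝ) : ℝ :=
  t ^ ((2 + α) / p - 1) * (1 - t) ^ (-((2 + α) / p))

/-- `H_{α,p}(s) = Σ_k binom(α,k)(-1)^k/(p-2α-2+2k) - (1/(2(α+1)))(1-s⁴)^(α+1)`. -/
noncomputable def Hfun (α p s : ℝ) : ℝ :=
  (∑' k : ℕ, gBinom α k * (-1) ^ k / (p - 2 * α - 2 + 2 * k)) -
    1 / (2 * (α + 1)) * (1 - s ^ 4) ^ (α + 1)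

/-- `K_{α,p}(s,t) = Σ_k binom(α,k)(-1)^k max{s²,t²}^(p-2α-2+2k)/(p-2α-2+2k)`. -/
noncomputable def Kfun (α p s t : ℝ) : ℝ :=
  ∑' k : ℕ, gBinom α k * (-1) ^ k * (max (s ^ 2) (t ^ 2)) ^ (p - 2 * α - 2 + 2 * (k : ℝ)) /
    (p - 2 * α - 2 + 2 * k)

/-- Condition (C): `∫₀¹ I_t((2+α)/p, 1-(2+α)/p) t^(2p-4α-5)(1-t⁴)^α dt - 1/(4(α+1)) ≤ 0`. -/
noncomputable def condC (α p : ℝ) : Prop :=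
  (∫ t in (0:ℝ)..1,
      betaReg t ((2 + α) / p) (1 - (2 + α) / p) * t ^ (2 * p - 4 * α - 5) * (1 - t ^ 4) ^ α)
    - 1 / (4 * (α + 1)) ≤ 0

/-- Lebesgue area measure on `ℂ` normalized so that the unit disk has measure 1. -/
noncomputable def normalizedArea : Measure ℂ := (ENNReal.ofReal Real.pi)⁻¹ • volume

/-- The (p-th power of the) weighted Bergman norm:
`‖f‖_{A^p_α} = ((α+1) ∫_𝔻 |f(w)|^p (1-|w|²)^α dA(w))^(1/p)`. -/
noncomputable def bergmanNorm (α p : ℝ) (f : ℂ → ℂ) : ℝ :=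
  ((α + 1) * ∫ w in Metric.ball (0 : ℂ) 1,
      ‖f w‖ ^ p * (1 - ‖w‖ ^ 2) ^ α ∂normalizedArea) ^ (1 / p)

/-- Membership in the weighted Bergman space `A^p_α`: `f` is analytic on the unit disk and has
finite Bergman norm (the defining integrand is integrable). -/
def MemBergman (α p : ℝ) (f : ℂ → ℂ) : Prop :=
  DifferentiableOn ℂ f (Metric.ball (0 : ℂ) 1) ∧
  IntegrableOn (fun w => ‖f w‖ ^ p * (1 - ‖w‖ ^ 2) ^ α)
    (Metric.ball (0 : ℂ) 1) normalizedArea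

/-- The Hilbert matrix operator `ℋ(f)(z) = ∫₀¹ f(t/((t-1)z+1)) / ((t-1)z+1) dt`. -/
noncomputable def hilbertOp (f : ℂ → ℂ) (z : ℂ) : ℂ :=
  ∫ t in (0:ℝ)..1, f ((t : ℂ) / (((t : ℂ) - 1) * z + 1)) / (((t : ℂ) - 1) * z + 1)

/-- The operator norm of the Hilbert matrix operator on `A^p_α`:
`sup { ‖ℋ f‖_{A^p_α} : f ∈ A^p_α, ‖f‖_{A^p_α} ≤ 1 }`. -/
noncomputable def hilbertOpNorm (α p : ℝ) : ℝ :=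
  sSup {c : ℝ | ∃ f : ℂ → ℂ, MemBergman α p f ∧ bergmanNorm α p f ≤ 1 ∧
    c = bergmanNorm α p (hilbertOp f)}


section CCAux
open Set

lemma rpow_aux_int {A B : ℝ} (hA : -1 < A) (hB : -1 < B) :
    IntervalIntegrable (fun t => t ^ A * (1 - t) ^ B) volume 0 1 := by
  have left : IntervalIntegrable (fun t : ℝ => t ^ A * (1 - t) ^ B) volume 0 (1/2) := by
    apply (intervalIntegral.intervalIntegrable_rpow' hA).mul_continuousOn
    apply ContinuousOn.rpow_const (continuous_const.sub continuous_id).continuousOn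
    intro t ht
    rw [Set.uIcc_of_le (by norm_num : (0:ℝ) ≤ 1/2)] at ht
    exact Or.inl (by intro h; have := ht.2; norm_num at h; linarith)
  have right : IntervalIntegrable (fun t : ℝ => t ^ A * (1 - t) ^ B) volume (1/2) 1 := by
    have h1 : IntervalIntegrable (fun t : ℝ => (1 - t) ^ B) volume (1/2) 1 := by
      have := (intervalIntegral.intervalIntegrable_rpow' (a := 1/2) (b := 0) hB).comp_sub_left 1
      norm_num at this
      exact this
    apply h1.continuousOn_mul
    apply ContinuousOn.rpow_const continuous_id.continuousOn
    intro t ht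
    rw [Set.uIcc_of_le (by norm_num : (1/2:ℝ) ≤ 1)] at ht
    exact Or.inl (by simp only [id]; intro h; have := ht.1; norm_num at h; linarith)
  exact left.trans right

lemma rpow_aux_pos {A B : ℝ} (hA : -1 < A) (hB : -1 < B) :
    0 < ∫ t in (0:ℝ)..1, t ^ A * (1 - t) ^ B := by
  apply intervalIntegral.intervalIntegral_pos_of_pos_on (rpow_aux_int hA hB)
  · intro t ht
    exact mul_pos (Real.rpow_pos_of_pos ht.1 _) (Real.rpow_pos_of_pos (by linarith [ht.2]) _)
  · norm_num

lemma II_congr_Icc {f g : ℝ → ℝ} (h : ∀ t ∈ Icc (0:ℝ) 1, f t = g t)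
    (hf : IntervalIntegrable f volume 0 1) : IntervalIntegrable g volume 0 1 := by
  rw [intervalIntegrable_iff_integrableOn_Ioc_of_le (by norm_num)] at hf ⊢
  exact hf.congr_fun (fun t ht => h t ⟨ht.1.le, ht.2⟩) measurableSet_Ioc

lemma int_congr_Icc {f g : ℝ → ℝ} (h : ∀ t ∈ Icc (0:ℝ) 1, f t = g t) :
    ∫ t in (0:ℝ)..1, f t = ∫ t in (0:ℝ)..1, g t := by
  apply intervalIntegral.integral_congr
  rwa [Set.uIcc_of_le (by norm_num : (0:ℝ) ≤ 1)]

lemma betaFn_intable {a b : ℝ} (ha : 0 < a) (hb : 0 < b) :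
    IntervalIntegrable (fun t => t ^ (a - 1) * (1 - t) ^ (b - 1)) volume 0 1 :=
  rpow_aux_int (by linarith) (by linarith)

lemma betaFn_pos {a b : ℝ} (ha : 0 < a) (hb : 0 < b) : 0 < betaFn a b :=
  rpow_aux_pos (by linarith) (by linarith)

lemma beta_split {a b : ℝ} (ha : 0 < a) (hb : 0 < b) :
    betaFn a b = betaFn (a + 1) b + betaFn a (b + 1) := by
  unfold betaFn
  rw [← intervalIntegral.integral_add
        (by simpa using rpow_aux_int (by linarith : (-1:ℝ) < a + 1 - 1) (by linarith))
        (by simpa using rpow_aux_int (by linarith : (-1:ℝ) < a - 1) (by linarith))]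
  apply int_congr_Icc
  intro t ht
  rcases eq_or_lt_of_le ht.1 with h0 | h0
  · rw [← h0]
    rw [Real.zero_rpow (by linarith : a + 1 - 1 ≠ 0)]
    simp [Real.one_rpow]
  · rcases eq_or_lt_of_le ht.2 with h1 | h1
    · rw [h1]
      simp only [sub_self]
      rw [Real.zero_rpow (by linarith : b + 1 - 1 ≠ 0)]
      simp [Real.one_rpow]
    · have e1 : t ^ (a + 1 - 1) = t ^ (a - 1) * t := by
        rw [show a + 1 - 1 = (a - 1) + 1 by ring, Real.rpow_add h0, Real.rpow_one]
      have e2 : (1 - t) ^ (b + 1 - 1) = (1 - t) ^ (b - 1) * (1 - t) := by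
        rw [show b + 1 - 1 = (b - 1) + 1 by ring, Real.rpow_add (by linarith), Real.rpow_one]
      rw [e1, e2]
      ring

lemma beta_ibp {a b : ℝ} (ha : 0 < a) (hb : 0 < b) :
    a * betaFn a (b + 1) = b * betaFn (a + 1) b := by
  have key : ∫ t in (0:ℝ)..1,
      (a * (t ^ (a - 1) * (1 - t) ^ b) - b * (t ^ a * (1 - t) ^ (b - 1))) = 0 := by
    have hderiv : ∀ t ∈ Ioo (0:ℝ) 1, HasDerivAt (fun u : ℝ => u ^ a * (1 - u) ^ b)
        (a * (t ^ (a - 1) * (1 - t) ^ b) - b * (t ^ a * (1 - t) ^ (b - 1))) t := by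
      intro t ht
      have h1 : HasDerivAt (fun u : ℝ => u ^ a) (a * t ^ (a - 1)) t :=
        Real.hasDerivAt_rpow_const (Or.inl ht.1.ne')
      have h2 : HasDerivAt (fun u : ℝ => (1 - u) ^ b) ((-1) * b * (1 - t) ^ (b - 1)) t := by
        have hsub : HasDerivAt (fun u : ℝ => 1 - u) (-1) t := by
          simpa using (hasDerivAt_id t).const_sub 1
        exact hsub.rpow_const (Or.inl (by intro h; have := ht.2; linarith))
      have : HasDerivAt (fun u : ℝ => u ^ a * (1 - u) ^ b) _ t := h1.mul h2
      convert this using 1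
      ring
    have hint : IntervalIntegrable
        (fun t : ℝ => a * (t ^ (a - 1) * (1 - t) ^ b) - b * (t ^ a * (1 - t) ^ (b - 1)))
        volume 0 1 := by
      apply IntervalIntegrable.sub
      · exact (rpow_aux_int (by linarith) (by linarith)).const_mul a
      · exact (rpow_aux_int (by linarith) (by linarith)).const_mul b
    have hta : Filter.Tendsto (fun u : ℝ => u ^ a * (1 - u) ^ b)
        (nhdsWithin 0 (Ioi 0)) (nhds 0) := by
      have t2 : Filter.Tendsto (fun u : ℝ => 1 - u) (nhds 0) (nhds 1) :=
        ((continuous_const.sub continuous_id : Continuous fun u : ℝ => 1 - u).tendsto' 0 1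
          (by norm_num))
      have : Filter.Tendsto (fun u : ℝ => u ^ a * (1 - u) ^ b) (nhds 0)
          (nhds ((0:ℝ) ^ a * (1:ℝ) ^ b)) :=
        ((Real.continuousAt_rpow_const 0 a (Or.inr ha.le)).tendsto).mul
          (t2.rpow_const (Or.inl one_ne_zero))
      rw [Real.zero_rpow ha.ne', zero_mul] at this
      exact this.mono_left nhdsWithin_le_nhds
    have htb : Filter.Tendsto (fun u : ℝ => u ^ a * (1 - u) ^ b)
        (nhdsWithin 1 (Iio 1)) (nhds 0) := by
      have t2 : Filter.Tendsto (fun u : ℝ => 1 - u) (nhds 1) (nhds 0) :=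
        ((continuous_const.sub continuous_id : Continuous fun u : ℝ => 1 - u).tendsto' 1 0
          (by norm_num))
      have : Filter.Tendsto (fun u : ℝ => u ^ a * (1 - u) ^ b) (nhds 1)
          (nhds ((1:ℝ) ^ a * (0:ℝ) ^ b)) :=
        ((Real.continuousAt_rpow_const 1 a (Or.inr ha.le)).tendsto).mul
          (t2.rpow_const (Or.inr hb.le))
      rw [Real.zero_rpow hb.ne', mul_zero] at this
      exact this.mono_left nhdsWithin_le_nhds
    have := intervalIntegral.integral_eq_sub_of_hasDerivAt_of_tendsto (by norm_num : (0:ℝ) < 1)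
      hderiv hint hta htb
    simpa using this
  have e1 : (∫ t in (0:ℝ)..1,
      (a * (t ^ (a - 1) * (1 - t) ^ b) - b * (t ^ a * (1 - t) ^ (b - 1))))
      = a * betaFn a (b + 1) - b * betaFn (a + 1) b := by
    rw [intervalIntegral.integral_sub ((rpow_aux_int (by linarith) (by linarith)).const_mul a)
        ((rpow_aux_int (by linarith) (by linarith)).const_mul b),
      intervalIntegral.integral_const_mul, intervalIntegral.integral_const_mul]
    unfold betaFn
    norm_num
  rw [e1] at key
  linarith

lemma beta_rec {a b : ℝ} (ha : 0 < a) (hb : 0 < b) :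
    betaFn (a + 1) b = (a / (a + b)) * betaFn a b := by
  have h1 := beta_split ha hb
  have h2 := beta_ibp ha hb
  have hab : a + b ≠ 0 := by positivity
  field_simp
  linear_combination (-a) * h1 - h2

lemma psi_contOn {X : ℝ} (hX0 : 0 < X) (hX1 : X < 1) :
    ContinuousOn (fun u : ℝ => u ^ (X - 1) * (1 - u) ^ (1 - X - 1)) (Ioo 0 1) := by
  apply ContinuousOn.mul
  · exact ContinuousOn.rpow_const continuous_id.continuousOn
      (fun t ht => Or.inl ht.1.ne')
  · exact ContinuousOn.rpow_const (continuous_const.sub continuous_id).continuousOn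
      (fun t ht => Or.inl (by intro h; have h2 := ht.2; have h3 : (1:ℝ) - t = 0 := h; linarith))

lemma main_identity {X s : ℝ} (hX0 : 0 < X) (hX1 : X < 1) (hs1 : 1 ≤ s) :
    s * ∫ t in (0:ℝ)..1, (betaInc t X (1 - X)) * t ^ (s - 1)
      = betaFn X (1 - X) - betaFn (X + s) (1 - X) := by
  set ψ : ℝ → ℝ := fun u => u ^ (X - 1) * (1 - u) ^ (1 - X - 1) with hψ
  set Φ : ℝ → ℝ := fun T => ∫ u in (0:ℝ)..T, ψ u with hΦ
  have hs0 : 0 < s := by linarith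
  have hψint : IntervalIntegrable ψ volume 0 1 := rpow_aux_int (by linarith) (by linarith)
  have hΦcont : ContinuousOn Φ (Icc 0 1) := by
    have := intervalIntegral.continuousOn_primitive_interval' hψint
      (left_mem_uIcc : (0:ℝ) ∈ uIcc 0 1)
    rwa [Set.uIcc_of_le (by norm_num : (0:ℝ) ≤ 1)] at this
  have hΦ0 : Φ 0 = 0 := intervalIntegral.integral_same
  have hΦ1 : Φ 1 = betaFn X (1 - X) := rfl
  -- derivative facts
  have hderiv : ∀ t ∈ Ioo (0:ℝ) 1, HasDerivAt (fun u => Φ u * u ^ s)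
      (ψ t * t ^ s + Φ t * (s * t ^ (s - 1))) t := by
    intro t ht
    have h1 : HasDerivAt Φ (ψ t) t := by
      apply intervalIntegral.integral_hasDerivAt_right
        (hψint.mono_set (uIcc_subset_uIcc left_mem_uIcc
          (by rw [Set.uIcc_of_le (by norm_num : (0:ℝ) ≤ 1)]; exact ⟨ht.1.le, ht.2.le⟩)))
      · exact ⟨Ioo 0 1, Ioo_mem_nhds ht.1 ht.2,
          ((psi_contOn hX0 hX1).aestronglyMeasurable measurableSet_Ioo)⟩
      · exact (psi_contOn hX0 hX1).continuousAt (Ioo_mem_nhds ht.1 ht.2)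
    have h2 : HasDerivAt (fun u : ℝ => u ^ s) (s * t ^ (s - 1)) t :=
      Real.hasDerivAt_rpow_const (Or.inl ht.1.ne')
    exact h1.mul h2
  have hint1 : IntervalIntegrable (fun t => ψ t * t ^ s) volume 0 1 := by
    apply II_congr_Icc _ (rpow_aux_int (show (-1:ℝ) < X + s - 1 by linarith) (show (-1:ℝ) < 1 - X - 1 by linarith))
    intro t ht
    rcases eq_or_lt_of_le ht.1 with h0 | h0
    · rw [← h0, Real.zero_rpow (by linarith : X + s - 1 ≠ 0), hψ]
      simp [Real.zero_rpow hs0.ne']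
    · rw [show X + s - 1 = (X - 1) + s by ring, Real.rpow_add h0, hψ]
      ring
  have hint2 : IntervalIntegrable (fun t => Φ t * (s * t ^ (s - 1))) volume 0 1 := by
    have : ContinuousOn (fun t : ℝ => Φ t * (s * t ^ (s - 1))) (Icc 0 1) :=
      hΦcont.mul ((continuous_const.mul (Real.continuous_rpow_const (by linarith))).continuousOn)
    apply this.intervalIntegrable_of_Icc (by norm_num)
  have hint : IntervalIntegrable (fun t => ψ t * t ^ s + Φ t * (s * t ^ (s - 1))) volume 0 1 :=
    hint1.add hint2
  -- limits
  have hta : Filter.Tendsto (fun t => Φ t * t ^ s) (nhdsWithin 0 (Ioi 0)) (nhds 0) := by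
    rw [← nhdsWithin_Ioo_eq_nhdsGT (show (0:ℝ) < 1 by norm_num)]
    have h1 : Filter.Tendsto Φ (nhdsWithin 0 (Ioo 0 1)) (nhds 0) := by
      have := (hΦcont 0 ⟨le_refl 0, zero_le_one⟩).tendsto
      rw [hΦ0] at this
      exact this.mono_left (nhdsWithin_mono _ Ioo_subset_Icc_self)
    have h2 : Filter.Tendsto (fun t : ℝ => t ^ s) (nhdsWithin 0 (Ioo 0 1)) (nhds (0 ^ s)) :=
      ((Real.continuousAt_rpow_const 0 s (Or.inr hs0.le)).tendsto).mono_left nhdsWithin_le_nhds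
    simpa using h1.mul h2
  have htb : Filter.Tendsto (fun t => Φ t * t ^ s) (nhdsWithin 1 (Iio 1))
      (nhds (betaFn X (1 - X))) := by
    rw [← nhdsWithin_Ioo_eq_nhdsLT (show (0:ℝ) < 1 by norm_num)]
    have h1 : Filter.Tendsto Φ (nhdsWithin 1 (Ioo 0 1)) (nhds (betaFn X (1 - X))) := by
      have := (hΦcont 1 ⟨zero_le_one, le_refl 1⟩).tendsto
      rw [hΦ1] at this
      exact this.mono_left (nhdsWithin_mono _ Ioo_subset_Icc_self)
    have h2 : Filter.Tendsto (fun t : ℝ => t ^ s) (nhdsWithin 1 (Ioo 0 1)) (nhds ((1:ℝ) ^ s)) :=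
      ((Real.continuousAt_rpow_const 1 s (Or.inl one_ne_zero)).tendsto).mono_left nhdsWithin_le_nhds
    have := h1.mul h2
    rwa [Real.one_rpow, mul_one] at this
  have key := intervalIntegral.integral_eq_sub_of_hasDerivAt_of_tendsto
    (show (0:ℝ) < 1 by norm_num) hderiv hint hta htb
  rw [sub_zero] at key
  rw [intervalIntegral.integral_add hint1 hint2] at key
  have e1 : ∫ t in (0:ℝ)..1, ψ t * t ^ s = betaFn (X + s) (1 - X) := by
    unfold betaFn
    rw [show X + s - 1 = X + s - 1 from rfl]
    apply int_congr_Icc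
    intro t ht
    rcases eq_or_lt_of_le ht.1 with h0 | h0
    · rw [← h0, hψ]
      simp only
      rw [Real.zero_rpow hs0.ne', Real.zero_rpow (by linarith : X + s - 1 ≠ 0)]
      ring
    · rw [show X + s - 1 = (X - 1) + s by ring, Real.rpow_add h0, hψ]
      ring
  have e2 : ∫ t in (0:ℝ)..1, Φ t * (s * t ^ (s - 1))
      = s * ∫ t in (0:ℝ)..1, Φ t * t ^ (s - 1) := by
    rw [← intervalIntegral.integral_const_mul]
    apply intervalIntegral.integral_congr
    intro t _
    ring
  rw [e1, e2] at key
  have : (fun t => betaInc t X (1 - X)) = Φ := rfl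
  simp only [show ∀ t:ℝ, betaInc t X (1 - X) = Φ t from fun t => rfl]
  linarith [key]

lemma pt_moment {X s t : ℝ} (hX0 : 0 < X) (hX1 : X < 1) (hs1 : 1 ≤ s) (hs2 : s ≤ 2)
    (ht : t ∈ Icc (0:ℝ) 1) :
    (3 - s) * (t ^ (X + 2 - 1) * (1 - t) ^ (1 - X - 1))
      - (2 - s) * (t ^ (X + 3 - 1) * (1 - t) ^ (1 - X - 1))
      ≤ t ^ (X + s - 1) * (1 - t) ^ (1 - X - 1) := by
  rcases eq_or_lt_of_le ht.1 with h0 | h0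
  · rw [← h0, Real.zero_rpow (by linarith : X + 2 - 1 ≠ 0),
      Real.zero_rpow (by linarith : X + 3 - 1 ≠ 0),
      Real.zero_rpow (by linarith : X + s - 1 ≠ 0)]
    simp
  · have hc : (0:ℝ) ≤ (1 - t) ^ (1 - X - 1) := Real.rpow_nonneg (by linarith [ht.2]) _
    have hq : (0:ℝ) ≤ t ^ (X - 1) := Real.rpow_nonneg h0.le _
    have e1 : t ^ (X + 2 - 1) = t ^ (X - 1) * (t * t) := by
      rw [show X + 2 - 1 = (X - 1) + ((2:ℕ):ℝ) by push_cast; ring, Real.rpow_add h0,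
        Real.rpow_natCast]
      ring
    have e2 : t ^ (X + 3 - 1) = t ^ (X - 1) * (t * t * t) := by
      rw [show X + 3 - 1 = (X - 1) + ((3:ℕ):ℝ) by push_cast; ring, Real.rpow_add h0,
        Real.rpow_natCast]
      ring
    have e3 : t ^ (X + s - 1) = t ^ (X - 1) * t ^ s := by
      rw [show X + s - 1 = (X - 1) + s by ring, Real.rpow_add h0]
    have key : (3 - s) * (t * t) - (2 - s) * (t * t * t) ≤ t ^ s := by
      have hlog : Real.log t ≤ t - 1 := Real.log_le_sub_one_of_pos h0
      have hexp : Real.log t * (s - 2) + 1 ≤ Real.exp (Real.log t * (s - 2)) :=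
        Real.add_one_le_exp _
      have hts : t ^ (s - 2) = Real.exp (Real.log t * (s - 2)) :=
        Real.rpow_def_of_pos h0 _
      have hsplit : t ^ s = (t * t) * t ^ (s - 2) := by
        rw [show s = ((2:ℕ):ℝ) + (s - 2) by push_cast; ring, Real.rpow_add h0, Real.rpow_natCast]
        ring_nf
      have hlb : 1 + (2 - s) * (1 - t) ≤ t ^ (s - 2) := by
        rw [hts]
        nlinarith [hexp, hlog]
      have ht2 : (0:ℝ) ≤ t * t := by positivity
      nlinarith [mul_le_mul_of_nonneg_left hlb ht2]
    rw [e1, e2, e3]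
    nlinarith [mul_le_mul_of_nonneg_left key (mul_nonneg hq hc)]

lemma beta_val2 {X : ℝ} (hX0 : 0 < X) (hX1 : X < 1) :
    betaFn (X + 2) (1 - X) = (X * (X + 1) / 2) * betaFn X (1 - X) := by
  have h1 : betaFn (X + 1) (1 - X) = X * betaFn X (1 - X) := by
    have := beta_rec hX0 (by linarith : (0:ℝ) < 1 - X)
    rw [show X + (1 - X) = 1 by ring] at this
    simpa using this
  have h2 := beta_rec (show (0:ℝ) < X + 1 by linarith) (show (0:ℝ) < 1 - X by linarith)
  rw [show X + 1 + (1 - X) = 2 by ring] at h2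
  rw [show X + 2 = X + 1 + 1 by ring, h2, h1]
  ring

lemma beta_val3 {X : ℝ} (hX0 : 0 < X) (hX1 : X < 1) :
    betaFn (X + 3) (1 - X) = (X * (X + 1) * (X + 2) / 6) * betaFn X (1 - X) := by
  have h2 := beta_val2 hX0 hX1
  have h3 := beta_rec (show (0:ℝ) < X + 2 by linarith) (show (0:ℝ) < 1 - X by linarith)
  rw [show X + 2 + (1 - X) = 3 by ring] at h3
  rw [show X + 3 = X + 2 + 1 by ring, h3, h2]
  ring

lemma moment_bound {X s : ℝ} (hX0 : 0 < X) (hX1 : X < 1) (hs1 : 1 ≤ s) (hs2 : s ≤ 2) :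
    ((3 - s) * (X * (X + 1) / 2) - (2 - s) * (X * (X + 1) * (X + 2) / 6)) * betaFn X (1 - X)
      ≤ betaFn (X + s) (1 - X) := by
  have hint2 : IntervalIntegrable (fun t => t ^ (X + 2 - 1) * (1 - t) ^ (1 - X - 1))
      volume 0 1 := rpow_aux_int (by linarith) (by linarith)
  have hint3 : IntervalIntegrable (fun t => t ^ (X + 3 - 1) * (1 - t) ^ (1 - X - 1))
      volume 0 1 := rpow_aux_int (by linarith) (by linarith)
  have hints : IntervalIntegrable (fun t => t ^ (X + s - 1) * (1 - t) ^ (1 - X - 1))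
      volume 0 1 := rpow_aux_int (by linarith) (by linarith)
  have hmono : ∫ t in (0:ℝ)..1,
      ((3 - s) * (t ^ (X + 2 - 1) * (1 - t) ^ (1 - X - 1))
        - (2 - s) * (t ^ (X + 3 - 1) * (1 - t) ^ (1 - X - 1)))
      ≤ ∫ t in (0:ℝ)..1, t ^ (X + s - 1) * (1 - t) ^ (1 - X - 1) := by
    apply intervalIntegral.integral_mono_on (by norm_num)
      ((hint2.const_mul _).sub (hint3.const_mul _)) hints
    exact fun t ht => pt_moment hX0 hX1 hs1 hs2 ht
  have elhs : ∫ t in (0:ℝ)..1,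
      ((3 - s) * (t ^ (X + 2 - 1) * (1 - t) ^ (1 - X - 1))
        - (2 - s) * (t ^ (X + 3 - 1) * (1 - t) ^ (1 - X - 1)))
      = (3 - s) * betaFn (X + 2) (1 - X) - (2 - s) * betaFn (X + 3) (1 - X) := by
    rw [intervalIntegral.integral_sub (hint2.const_mul _) (hint3.const_mul _),
      intervalIntegral.integral_const_mul, intervalIntegral.integral_const_mul]
    rfl
  rw [elhs] at hmono
  have e := hmono
  rw [beta_val2 hX0 hX1, beta_val3 hX0 hX1] at e
  calc ((3 - s) * (X * (X + 1) / 2) - (2 - s) * (X * (X + 1) * (X + 2) / 6)) * betaFn X (1 - X)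
      = (3 - s) * ((X * (X + 1) / 2) * betaFn X (1 - X))
        - (2 - s) * ((X * (X + 1) * (X + 2) / 6) * betaFn X (1 - X)) := by ring
    _ ≤ ∫ t in (0:ℝ)..1, t ^ (X + s - 1) * (1 - t) ^ (1 - X - 1) := e
    _ = betaFn (X + s) (1 - X) := rfl

theorem keyineq (α p x s : ℝ) (hα0 : 0 < α) (hα1 : α ≤ 1/15000)
    (hp1 : 5/2 + 2*α ≤ p) (hp2 : p ≤ 3 + 2*α)
    (hx : x * p = 2 + α) (hs : s = 2*p - 4*α - 4) :
    4*(1+α)*(1 - (3-s)*(x*(x+1)/2) + (2-s)*(x*(x+1)*(x+2)/6)) ≤ s := by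
  have hp0 : (0:ℝ) < p := by linarith
  have hx0 : 0 < x := by nlinarith
  have hxu : x ≤ 4/5 := by nlinarith
  have h0 : x*s = (4+2*α) - (4+4*α)*x := by linear_combination 2*hx + x*hs
  have h1 : x^2*s = (4+2*α)*x - (4+4*α)*x^2 := by linear_combination x*h0
  have h2 : x^3*s = (4+2*α)*x^2 - (4+4*α)*x^3 := by linear_combination x^2*h0
  have h3 : x^4*s = (4+2*α)*x^3 - (4+4*α)*x^4 := by linear_combination x^3*h0
  have hu : (0:ℝ) ≤ 4/5 - x := by linarith
  have hq : 0 ≤ 6*(4+2*α) - (4+4*α)*(12+(4+2*α))*x + (4+4*α)*(5+(4+4*α))*x^2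
      + (4+4*α)*(3+(4+2*α))*x^3 - (4+4*α)*(2+(4+4*α))*x^4 := by
    nlinarith [mul_nonneg (mul_nonneg (mul_nonneg hu hu) hu) hx0.le,
      mul_nonneg (mul_nonneg hu hu) hu, mul_nonneg hu hu, hu, hx0.le,
      mul_nonneg hα0.le hx0.le, mul_nonneg (mul_nonneg hα0.le hx0.le) hx0.le,
      mul_nonneg hα0.le (mul_nonneg (mul_nonneg hx0.le hx0.le) hx0.le),
      mul_nonneg hα0.le (mul_nonneg (mul_nonneg hx0.le hx0.le) (mul_nonneg hx0.le hx0.le)),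
      mul_nonneg (mul_nonneg hα0.le hα0.le) hx0.le, hα1, hα0.le]
  nlinarith [hq, h0, h1, h2, h3, hx0]

end CCAux

theorem condC_small_alpha_b (α p : ℝ) (hα0 : 0 < α) (hα1 : α ≤ 1 / 15000)
    (hp1 : 5 / 2 + 2 * α ≤ p) (hp2 : p ≤ 3 + 2 * α) :
    condC α p := by
  have hp0 : (0:ℝ) < p := by linarith
  set X : ℝ := (2 + α) / p with hXdef
  set s : ℝ := 2 * p - 4 * α - 4 with hsdef
  have hxp : X * p = 2 + α := div_mul_cancel₀ _ hp0.ne'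
  have hX0 : 0 < X := by
    rw [hXdef]
    positivity
  have hX1 : X < 1 := by
    rw [hXdef, div_lt_one hp0]
    linarith
  have hs1 : 1 ≤ s := by rw [hsdef]; linarith
  have hs2 : s ≤ 2 := by rw [hsdef]; linarith
  have hs0 : 0 < s := by linarith
  have hJpos : 0 < betaFn X (1 - X) := betaFn_pos hX0 (by linarith)
  set J : ℝ := betaFn X (1 - X) with hJdef
  -- continuity of the incomplete beta function
  have hψint : IntervalIntegrable (fun u : ℝ => u ^ (X - 1) * (1 - u) ^ (1 - X - 1))
      volume 0 1 := rpow_aux_int (by linarith) (by linarith)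
  have hΦcont : ContinuousOn (fun T => betaInc T X (1 - X)) (Set.Icc 0 1) := by
    have := intervalIntegral.continuousOn_primitive_interval' hψint
      (Set.left_mem_uIcc : (0:ℝ) ∈ Set.uIcc 0 1)
    rw [Set.uIcc_of_le (by norm_num : (0:ℝ) ≤ 1)] at this
    exact this
  have hΦnonneg : ∀ T ∈ Set.Icc (0:ℝ) 1, 0 ≤ betaInc T X (1 - X) := by
    intro T hT
    apply intervalIntegral.integral_nonneg hT.1
    intro u hu
    exact mul_nonneg (Real.rpow_nonneg hu.1 _)
      (Real.rpow_nonneg (by linarith [hu.2, hT.2]) _)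
  -- rewrite the exponent
  have hrw : 2 * p - 4 * α - 5 = s - 1 := by rw [hsdef]; ring
  rw [condC, hrw]
  -- continuity facts
  have hcont_pow : ContinuousOn (fun t : ℝ => t ^ (s - 1)) (Set.Icc 0 1) :=
    (Real.continuous_rpow_const (by linarith : (0:ℝ) ≤ s - 1)).continuousOn
  have hcont_g : ContinuousOn (fun t : ℝ => betaInc t X (1 - X) * t ^ (s - 1) / J)
      (Set.Icc 0 1) := (hΦcont.mul hcont_pow).div_const J
  have hgint : IntervalIntegrable (fun t : ℝ => betaInc t X (1 - X) * t ^ (s - 1) / J)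
      volume 0 1 := hcont_g.intervalIntegrable_of_Icc (by norm_num)
  have hcont_w : ContinuousOn (fun t : ℝ => (1 - t ^ 4) ^ α) (Set.Icc 0 1) :=
    ContinuousOn.rpow_const (continuous_const.sub (continuous_pow 4)).continuousOn
      (fun t _ => Or.inr hα0.le)
  have hfint : IntervalIntegrable
      (fun t : ℝ => betaReg t X (1 - X) * t ^ (s - 1) * (1 - t ^ 4) ^ α) volume 0 1 := by
    have hcont : ContinuousOn
        (fun t : ℝ => betaInc t X (1 - X) * t ^ (s - 1) / J * (1 - t ^ 4) ^ α)
        (Set.Icc 0 1) := hcont_g.mul hcont_w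
    have hii : IntervalIntegrable
        (fun t : ℝ => betaInc t X (1 - X) * t ^ (s - 1) / J * (1 - t ^ 4) ^ α) volume 0 1 :=
      hcont.intervalIntegrable_of_Icc (by norm_num)
    apply II_congr_Icc _ hii
    intro t _
    rw [betaReg, ← hJdef]
    ring
  -- comparison step
  have hmono : (∫ t in (0:ℝ)..1, betaReg t X (1 - X) * t ^ (s - 1) * (1 - t ^ 4) ^ α)
      ≤ ∫ t in (0:ℝ)..1, betaInc t X (1 - X) * t ^ (s - 1) / J := by
    apply intervalIntegral.integral_mono_on (by norm_num) hfint hgint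
    intro t ht
    have hw1 : (1 - t ^ 4) ^ α ≤ 1 :=
      Real.rpow_le_one (by nlinarith [pow_le_one₀ ht.1 ht.2 (n := 4)])
        (by nlinarith [pow_nonneg ht.1 4]) hα0.le
    have hw0 : 0 ≤ betaInc t X (1 - X) * t ^ (s - 1) / J := by
      apply div_nonneg _ hJpos.le
      exact mul_nonneg (hΦnonneg t ht) (Real.rpow_nonneg ht.1 _)
    calc betaReg t X (1 - X) * t ^ (s - 1) * (1 - t ^ 4) ^ α
        = (betaInc t X (1 - X) * t ^ (s - 1) / J) * (1 - t ^ 4) ^ α := by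
          rw [betaReg, ← hJdef]; ring
      _ ≤ (betaInc t X (1 - X) * t ^ (s - 1) / J) * 1 :=
          mul_le_mul_of_nonneg_left hw1 hw0
      _ = betaInc t X (1 - X) * t ^ (s - 1) / J := by ring
  -- the exact identity
  have hid : s * ∫ t in (0:ℝ)..1, (betaInc t X (1 - X)) * t ^ (s - 1)
      = J - betaFn (X + s) (1 - X) := main_identity hX0 hX1 hs1
  have hmb : ((3 - s) * (X * (X + 1) / 2) - (2 - s) * (X * (X + 1) * (X + 2) / 6)) * J
      ≤ betaFn (X + s) (1 - X) := moment_bound hX0 hX1 hs1 hs2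
  have hkey : 4 * (1 + α) * (1 - (3 - s) * (X * (X + 1) / 2)
      + (2 - s) * (X * (X + 1) * (X + 2) / 6)) ≤ s :=
    keyineq α p X s hα0 hα1 hp1 hp2 hxp hsdef
  -- combine
  have hIle : (∫ t in (0:ℝ)..1, betaInc t X (1 - X) * t ^ (s - 1))
      ≤ J / (4 * (α + 1)) := by
    rw [le_div_iff₀ (by linarith : (0:ℝ) < 4 * (α + 1))]
    nlinarith [hid, mul_le_mul_of_nonneg_left hmb (by linarith : (0:ℝ) ≤ 4 * (α + 1)),
      mul_le_mul_of_nonneg_right hkey hJpos.le, hs0]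
  have hdiv : (∫ t in (0:ℝ)..1, betaInc t X (1 - X) * t ^ (s - 1) / J)
      = (∫ t in (0:ℝ)..1, betaInc t X (1 - X) * t ^ (s - 1)) / J := by
    rw [intervalIntegral.integral_div]
  have hfinal : (∫ t in (0:ℝ)..1, betaReg t X (1 - X) * t ^ (s - 1) * (1 - t ^ 4) ^ α)
      ≤ 1 / (4 * (α + 1)) := by
    have h2 : (∫ t in (0:ℝ)..1, betaInc t X (1 - X) * t ^ (s - 1)) / J
        ≤ (J / (4 * (α + 1))) / J := by
      exact (div_le_div_iff_of_pos_right hJpos).mpr hIle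
    have h3 : (J / (4 * (α + 1))) / J = 1 / (4 * (α + 1)) := by
      rw [div_div, mul_comm, ← div_div, div_self hJpos.ne']
    linarith [hmono, hdiv ▸ h2, h3 ▸ h2]
  linarith [hfinal]
end

section
/- Let α = 1 and 4 < p ≤ 5.1. Then condition (C) fails, i.e., ∫₀¹ I_t(3/p, 1−3/p) t^{2p−9}(1−t⁴) dt − 1/8 > 0. -/
open MeasureTheory intervalIntegral

open Real in
lemma betaFn_reflection {a : ℝ} (h0 : 0 < a) (h1 : a < 1) :
    betaFn a (1 - a) = π / Real.sin (π * a) := by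
  have hbc : Complex.betaIntegral a ((1 - a : ℝ) : ℂ) = (betaFn a (1 - a) : ℂ) := by
    rw [Complex.betaIntegral, betaFn]
    calc ∫ x : ℝ in (0:ℝ)..1, (x:ℂ) ^ ((a:ℂ) - 1) * ((1:ℂ) - (x:ℂ)) ^ (((1 - a : ℝ):ℂ) - 1)
        = ∫ x : ℝ in (0:ℝ)..1, ((x ^ (a - 1) * (1 - x) ^ (1 - a - 1) : ℝ) : ℂ) := by
          refine intervalIntegral.integral_congr fun x hx => ?_
          rw [Set.uIcc_of_le (by norm_num : (0:ℝ) ≤ 1)] at hx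
          obtain ⟨hx0, hx1⟩ := hx
          rw [Complex.ofReal_mul, Complex.ofReal_cpow hx0,
            Complex.ofReal_cpow (by linarith : (0:ℝ) ≤ 1 - x)]
          push_cast
          ring_nf
      _ = _ := RCLike.intervalIntegral_ofReal
  have hg := Complex.Gamma_mul_Gamma_eq_betaIntegral (s := (a : ℂ)) (t := ((1 - a : ℝ) : ℂ))
      (by simpa using h0) (by simp; linarith)
  rw [show ((a : ℂ) + ((1 - a : ℝ):ℂ)) = 1 by push_cast; ring, Complex.Gamma_one, one_mul] at hg
  rw [hbc, Complex.Gamma_ofReal, Complex.Gamma_ofReal, ← Complex.ofReal_mul] at hg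
  have := Complex.ofReal_injective hg
  rw [← this, Real.Gamma_mul_Gamma_one_sub]

lemma psi_intble {a : ℝ} (h0 : 0 < a) (h1 : a < 1) :
    IntervalIntegrable (fun s : ℝ => s ^ (a - 1) * (1 - s) ^ (1 - a - 1)) volume 0 1 := by
  have hC := Complex.betaIntegral_convergent (u := (a:ℂ)) (v := ((1 - a : ℝ):ℂ))
    (by simpa using h0) (by simp; linarith)
  rw [intervalIntegrable_iff] at hC ⊢
  refine (hC.re).congr ?_
  filter_upwards [MeasureTheory.ae_restrict_mem measurableSet_Ioc] with x hx
  rw [Set.uIoc_of_le (by norm_num : (0:ℝ) ≤ 1)] at hx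
  obtain ⟨hx0, hx1⟩ := hx
  rw [show ((a:ℂ) - 1) = ((a - 1 : ℝ):ℂ) by push_cast; ring,
    show (((1 - a : ℝ):ℂ) - 1) = ((1 - a - 1 : ℝ):ℂ) by push_cast; ring,
    show ((1:ℂ) - (x:ℂ)) = ((1 - x : ℝ):ℂ) by push_cast; ring,
    ← Complex.ofReal_cpow hx0.le, ← Complex.ofReal_cpow (by linarith : (0:ℝ) ≤ 1 - x),
    ← Complex.ofReal_mul]
  simp

lemma poly_le_rpow {a s : ℝ} (ha : 1/2 ≤ a) (hs0 : 0 ≤ s) (hs1 : s < 1) :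
    1 + s/2 + 3*s^2/8 + 5*s^3/16 ≤ (1 - s) ^ (-a : ℝ) := by
  have h1s : 0 < 1 - s := by linarith
  have hqpos : 0 < 1 + s/2 + 3*s^2/8 + 5*s^3/16 := by positivity
  have hr := Real.sqrt_nonneg (1 - s)
  have hr2 : Real.sqrt (1-s) ^ 2 = 1 - s := Real.sq_sqrt h1s.le
  have hpoly : (1 + s/2 + 3*s^2/8 + 5*s^3/16)^2 * (1 - s) ≤ 1 := by
    nlinarith [pow_nonneg hs0 4, pow_nonneg hs0 5, pow_nonneg hs0 6, pow_nonneg hs0 7]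
  have hsq : ((1 + s/2 + 3*s^2/8 + 5*s^3/16) * Real.sqrt (1-s))^2 ≤ 1 := by
    rw [mul_pow, hr2]; exact hpoly
  have key : (1 + s/2 + 3*s^2/8 + 5*s^3/16) * Real.sqrt (1 - s) ≤ 1 := by
    nlinarith [mul_nonneg hqpos.le hr]
  have hsqrtpos : 0 < Real.sqrt (1 - s) := Real.sqrt_pos.mpr h1s
  have h12 : 1 + s/2 + 3*s^2/8 + 5*s^3/16 ≤ (1 - s) ^ (-(1/2) : ℝ) := by
    rw [Real.rpow_neg h1s.le, ← Real.sqrt_eq_rpow, inv_eq_one_div, le_div_iff₀ hsqrtpos]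
    exact key
  refine h12.trans ?_
  exact Real.rpow_le_rpow_of_exponent_ge h1s (by linarith) (by linarith)

lemma cont_rpow_base {a t : ℝ} (ht1 : t < 1) (ht0 : 0 ≤ t) :
    ContinuousOn (fun s : ℝ => (1 - s) ^ (-a : ℝ)) (Set.uIcc 0 t) := by
  apply ContinuousOn.rpow_const
  · exact (continuous_const.sub continuous_id).continuousOn
  · intro x hx
    rw [Set.uIcc_of_le ht0] at hx
    refine Or.inl fun h => ?_
    have := hx.2
    nlinarith

lemma betaInc_lb {a t : ℝ} (ha1 : 1/2 ≤ a) (ha2 : a < 1) (ht0 : 0 < t) (ht1 : t < 1) :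
    t^a/a + t^(a+1)/(2*(a+1)) + 3*t^(a+2)/(8*(a+2)) + 5*t^(a+3)/(16*(a+3))
      ≤ betaInc t a (1-a) := by
  have ha0 : (0:ℝ) < a := by linarith
  rw [betaInc, show (1 - a - 1 : ℝ) = -a by ring]
  have hia : ∀ c : ℝ, -1 < c → IntervalIntegrable (fun s : ℝ => s ^ c) volume 0 t :=
    fun c hc => intervalIntegral.intervalIntegrable_rpow' hc
  have hg_int : IntervalIntegrable
      (fun s : ℝ => s^(a-1) + (1/2)*s^a + (3/8)*s^(a+1) + (5/16)*s^(a+2)) volume 0 t := by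
    exact (((hia _ (by linarith)).add ((hia _ (by linarith)).const_mul _)).add
      ((hia _ (by linarith)).const_mul _)).add ((hia _ (by linarith)).const_mul _)
  have hpsi_int : IntervalIntegrable (fun s : ℝ => s^(a-1) * (1-s)^(-a:ℝ)) volume 0 t :=
    (hia _ (by linarith)).mul_continuousOn (cont_rpow_base ht1 ht0.le)
  have step1 : (∫ s in (0:ℝ)..t, (s^(a-1) + (1/2)*s^a + (3/8)*s^(a+1) + (5/16)*s^(a+2)))
      ≤ ∫ s in (0:ℝ)..t, s^(a-1) * (1-s)^(-a:ℝ) := by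
    apply intervalIntegral.integral_mono_on ht0.le hg_int hpsi_int
    intro s hs
    rcases eq_or_lt_of_le hs.1 with h0 | h0
    · simp only [← h0, Real.zero_rpow (by linarith : a-1 ≠ 0), Real.zero_rpow ha0.ne',
        Real.zero_rpow (by linarith : a+1 ≠ 0), Real.zero_rpow (by linarith : a+2 ≠ 0)]
      norm_num
    · have hs1 : s < 1 := lt_of_le_of_lt hs.2 ht1
      have e1 : s^a = s^(a-1) * s := by
        nth_rewrite 1 [show a = (a-1) + 1 by ring]
        rw [Real.rpow_add h0, Real.rpow_one]
      have e2 : s^(a+1) = s^(a-1) * s^2 := by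
        nth_rewrite 1 [show a+1 = (a-1) + ((2:ℕ):ℝ) by push_cast; ring]
        rw [Real.rpow_add h0, Real.rpow_natCast]
      have e3 : s^(a+2) = s^(a-1) * s^3 := by
        nth_rewrite 1 [show a+2 = (a-1) + ((3:ℕ):ℝ) by push_cast; ring]
        rw [Real.rpow_add h0, Real.rpow_natCast]
      calc s^(a-1) + (1/2)*s^a + (3/8)*s^(a+1) + (5/16)*s^(a+2)
          = s^(a-1) * (1 + s/2 + 3*s^2/8 + 5*s^3/16) := by rw [e1, e2, e3]; ring
        _ ≤ s^(a-1) * (1-s)^(-a:ℝ) :=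
            mul_le_mul_of_nonneg_left (poly_le_rpow ha1 hs.1 hs1) (Real.rpow_nonneg hs.1 _)
  refine le_trans (le_of_eq ?_) step1
  have hint : ∀ c : ℝ, -1 < c → (∫ s in (0:ℝ)..t, s ^ c) = t^(c+1)/(c+1) := by
    intro c hc
    rw [integral_rpow (Or.inl hc), Real.zero_rpow (by linarith : c+1 ≠ 0)]
    ring
  rw [integral_add (((hia _ (by linarith : (-1:ℝ) < a-1)).add
        ((hia _ (by linarith : (-1:ℝ) < a)).const_mul _)).add
        ((hia _ (by linarith : (-1:ℝ) < a+1)).const_mul _))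
      ((hia _ (by linarith : (-1:ℝ) < a+2)).const_mul _),
    integral_add ((hia _ (by linarith : (-1:ℝ) < a-1)).add
        ((hia _ (by linarith : (-1:ℝ) < a)).const_mul _))
      ((hia _ (by linarith : (-1:ℝ) < a+1)).const_mul _),
    integral_add (hia _ (by linarith : (-1:ℝ) < a-1))
      ((hia _ (by linarith : (-1:ℝ) < a)).const_mul _),
    intervalIntegral.integral_const_mul, intervalIntegral.integral_const_mul, intervalIntegral.integral_const_mul,
    hint _ (by linarith : (-1:ℝ) < a-1), hint _ (by linarith : (-1:ℝ) < a),
    hint _ (by linarith : (-1:ℝ) < a+1), hint _ (by linarith : (-1:ℝ) < a+2)]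
  rw [show a - 1 + 1 = a by ring, show a+1+1 = a+2 by ring, show a+2+1 = a+3 by ring]
  have h1 : a ≠ 0 := ha0.ne'
  have h2 : a + 1 ≠ 0 := by positivity
  have h3 : a + 2 ≠ 0 := by positivity
  have h4 : a + 3 ≠ 0 := by positivity
  field_simp

/-- The elementary lower-bound sum. -/
noncomputable def Wfun (q r : ℝ) : ℝ :=
  (1/(3/q))*(1/(2*r-8+3/q) - 1/(2*q-4+3/r))
  + (1/(2*(3/q+1)))*(1/(2*r-8+3/q+1) - 1/(2*q-4+3/r+1))
  + (3/(8*(3/q+2)))*(1/(2*r-8+3/q+2) - 1/(2*q-4+3/r+2))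
  + (5/(16*(3/q+3)))*(1/(2*r-8+3/q+3) - 1/(2*q-4+3/r+3))

lemma hterm {c u U x X y Y : ℝ} (hc : 0 ≤ c) (hu0 : 0 < u) (huU : u ≤ U) (hx0 : 0 < x)
    (hxX : x ≤ X) (hY0 : 0 < Y) (hYy : Y ≤ y) (hXY : X ≤ Y) :
    c/U * (1/X - 1/Y) ≤ c/u * (1/x - 1/y) := by
  have hX0 : 0 < X := lt_of_lt_of_le hx0 hxX
  have hy0 : 0 < y := lt_of_lt_of_le hY0 hYy
  have hbr := one_div_le_one_div_of_le hX0 hXY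
  gcongr <;> linarith

open Real in
lemma W_interval (p p1 p2 : ℝ) (h1 : p1 ≤ p) (h2 : p ≤ p2) (h4 : 4 ≤ p1) (h5 : p2 ≤ 5.2)
    (hXY0 : 1 ≤ 2*p1 - 4 + 3/p2 - (2*p2 - 8 + 3/p1)) :
    Wfun p1 p2 ≤ Wfun p p := by
  rw [Wfun, Wfun]
  have hp0 : (0:ℝ) < p := by linarith
  have hp10 : (0:ℝ) < p1 := by linarith
  have hp20 : (0:ℝ) < p2 := by linarith
  have ha1 : 3/p ≤ 3/p1 := by
    apply div_le_div_of_nonneg_left (by norm_num) hp10 h1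
  have ha2 : 3/p2 ≤ 3/p := by
    apply div_le_div_of_nonneg_left (by norm_num) hp0 h2
  have ha0 : 0 < 3/p := by positivity
  have hx0 : 0 < 2*p - 8 + 3/p := by
    have h8 : 0 ≤ 2*p - 8 := by linarith
    linarith
  have hX : 2*p - 8 + 3/p ≤ 2*p2 - 8 + 3/p1 := by
    have : 2*p ≤ 2*p2 := by linarith
    linarith
  have hY : 2*p1 - 4 + 3/p2 ≤ 2*p - 4 + 3/p := by linarith
  have h3p2 : 0 < 3/p2 := by positivity
  have hY0 : 0 < 2*p1 - 4 + 3/p2 := by linarith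
  have hXY : 2*p2 - 8 + 3/p1 ≤ 2*p1 - 4 + 3/p2 := by linarith
  refine add_le_add (add_le_add (add_le_add ?_ ?_) ?_) ?_
  · exact hterm (by norm_num) (by positivity) (by linarith) hx0 hX hY0 hY hXY
  · exact hterm (by norm_num) (by positivity) (by linarith) (by linarith) (by linarith)
      (by linarith) (by linarith) (by linarith)
  · exact hterm (by norm_num) (by positivity) (by linarith) (by linarith) (by linarith)
      (by linarith) (by linarith) (by linarith)
  · exact hterm (by norm_num) (by positivity) (by linarith) (by linarith) (by linarith)
      (by linarith) (by linarith) (by linarith)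

open Real in
lemma sin_lb {a aH : ℝ} (h1 : 1/2 ≤ a) (h2 : a ≤ aH) :
    1 - (3.141593:ℝ)^2*(aH - 1/2)^2/2 ≤ Real.sin (π * a) := by
  have h := Real.one_sub_sq_div_two_le_cos (x := π*a - π/2)
  have hc : Real.cos (π*a - π/2) = Real.sin (π*a) := Real.cos_sub_pi_div_two _
  have hπ : π ≤ 3.141593 := le_of_lt Real.pi_lt_d6
  have hπ0 : (0:ℝ) < π := Real.pi_pos
  have h3 : π*(a-1/2) ≤ 3.141593*(aH-1/2) :=
    mul_le_mul hπ (by linarith) (by linarith) (by norm_num)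
  have h4 : (π*(a-1/2))^2 ≤ (3.141593*(aH-1/2))^2 := by
    apply pow_le_pow_left₀ (mul_nonneg Real.pi_pos.le (by linarith)) h3
  rw [hc] at h
  nlinarith [h, h4]

open Real in
lemma key_sub (p p1 p2 : ℝ) (hp : p1 ≤ p) (hp2 : p ≤ p2) (h4 : 4 ≤ p1) (h5 : p2 ≤ 5.1)
    (hXY0 : 1 ≤ 2*p1 - 4 + 3/p2 - (2*p2 - 8 + 3/p1))
    (hσ0 : 0 ≤ 1 - (3.141593:ℝ)^2*(3/p1 - 1/2)^2/2)
    (hW0 : 0 ≤ Wfun p1 p2)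
    (hnum : (3.141593:ℝ)/8 ≤ (1 - (3.141593:ℝ)^2*(3/p1 - 1/2)^2/2) * Wfun p1 p2) :
    (3.141593:ℝ)/8 ≤ Real.sin (π*(3/p)) * Wfun p p := by
  have hp0 : (0:ℝ) < p := by linarith
  have hp10 : (0:ℝ) < p1 := by linarith
  have h12 : 1/2 ≤ 3/p := by
    rw [le_div_iff₀ hp0]; linarith
  have haH : 3/p ≤ 3/p1 := div_le_div_of_nonneg_left (by norm_num) hp10 hp
  have hs := sin_lb h12 haH
  have hW := W_interval p p1 p2 hp hp2 h4 (by linarith) hXY0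
  calc (3.141593:ℝ)/8 ≤ (1 - (3.141593:ℝ)^2*(3/p1 - 1/2)^2/2) * Wfun p1 p2 := hnum
    _ ≤ Real.sin (π*(3/p)) * Wfun p p := mul_le_mul hs hW hW0 (le_trans hσ0 hs)

open Real in
lemma key (p : ℝ) (hp1 : 4 < p) (hp2 : p ≤ 5.1) :
    1/8 < Real.sin (π*(3/p)) / π * Wfun p p := by
  have hπ0 : (0:ℝ) < π := Real.pi_pos
  have hπlt : π < 3.141593 := Real.pi_lt_d6
  have hmain : (3.141593:ℝ)/8 ≤ Real.sin (π*(3/p)) * Wfun p p := by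
    rcases le_or_gt p 4.48 with h | h
    · exact key_sub p 4 4.48 hp1.le h (by norm_num) (by norm_num) (by norm_num)
        (by norm_num) (by norm_num [Wfun]) (by norm_num [Wfun])
    rcases le_or_gt p 4.79 with h2 | h2
    · exact key_sub p 4.48 4.79 h.le h2 (by norm_num) (by norm_num) (by norm_num)
        (by norm_num) (by norm_num [Wfun]) (by norm_num [Wfun])
    rcases le_or_gt p 4.97 with h3 | h3
    · exact key_sub p 4.79 4.97 h2.le h3 (by norm_num) (by norm_num) (by norm_num)
        (by norm_num) (by norm_num [Wfun]) (by norm_num [Wfun])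
    rcases le_or_gt p 5.06 with h4 | h4
    · exact key_sub p 4.97 5.06 h3.le h4 (by norm_num) (by norm_num) (by norm_num)
        (by norm_num) (by norm_num [Wfun]) (by norm_num [Wfun])
    · exact key_sub p 5.06 5.1 h4.le hp2 (by norm_num) (by norm_num) (by norm_num)
        (by norm_num) (by norm_num [Wfun]) (by norm_num [Wfun])
  rw [div_mul_eq_mul_div, lt_div_iff₀ hπ0]
  nlinarith [hmain]

lemma pair_int {e f : ℝ} (he : -1 < e) (hf : -1 < f) :
    (∫ t in (0:ℝ)..1, (t^e - t^f)) = 1/(e+1) - 1/(f+1) := by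
  rw [integral_sub (intervalIntegral.intervalIntegrable_rpow' he)
      (intervalIntegral.intervalIntegrable_rpow' hf),
    integral_rpow (Or.inl he), integral_rpow (Or.inl hf),
    Real.zero_rpow (by linarith : e+1 ≠ 0), Real.zero_rpow (by linarith : f+1 ≠ 0),
    Real.one_rpow, Real.one_rpow]
  ring

theorem condC_fails_alpha_one (p : ℝ) (hp1 : 4 < p) (hp2 : p ≤ 5.1) :
    (∫ t in (0:ℝ)..1, betaReg t (3 / p) (1 - 3 / p) * t ^ (2 * p - 9) * (1 - t ^ 4))
      - 1 / 8 > 0 := by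
  have hp0 : (0:ℝ) < p := by linarith
  set a : ℝ := 3 / p with ha
  have ha0 : 0 < a := by positivity
  have ha12 : 1/2 ≤ a := by rw [ha, le_div_iff₀ hp0]; linarith
  have ha34 : a < 3/4 := by
    rw [ha, div_lt_div_iff₀ hp0 (by norm_num)]; linarith
  have ha1 : a < 1 := by linarith
  have hπ0 := Real.pi_pos
  have hS0 : 0 < Real.sin (Real.pi * a) :=
    Real.sin_pos_of_pos_of_lt_pi (by positivity) (by nlinarith)
  have hBeta : betaFn a (1-a) = Real.pi / Real.sin (Real.pi*a) := betaFn_reflection ha0 ha1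
  have hψ : IntervalIntegrable (fun s : ℝ => s ^ (a-1) * (1-s) ^ (1-a-1)) volume 0 1 :=
    psi_intble ha0 ha1
  set S : ℝ := Real.sin (Real.pi * a) with hSdef
  set L : ℝ → ℝ := fun t => S/Real.pi *
      ((1/a) * (t^(2*p-9+a) - t^(2*p-5+a))
      + (1/(2*(a+1))) * (t^(2*p-9+(a+1)) - t^(2*p-5+(a+1)))
      + (3/(8*(a+2))) * (t^(2*p-9+(a+2)) - t^(2*p-5+(a+2)))
      + (5/(16*(a+3))) * (t^(2*p-9+(a+3)) - t^(2*p-5+(a+3)))) with hLdef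
  have hexp : ∀ k : ℝ, 0 ≤ k → -1 < 2*p-9+(a+k) := by
    intro k hk; nlinarith
  have hexp' : ∀ k : ℝ, 0 ≤ k → -1 < 2*p-5+(a+k) := by
    intro k hk; nlinarith
  have hexpa : (-1:ℝ) < 2*p-9+a := by nlinarith
  have hexpa' : (-1:ℝ) < 2*p-5+a := by nlinarith
  have hpair : ∀ k : ℝ, 0 ≤ k →
      IntervalIntegrable (fun t : ℝ => t^(2*p-9+(a+k)) - t^(2*p-5+(a+k))) volume 0 1 :=
    fun k hk => (intervalIntegral.intervalIntegrable_rpow' (hexp k hk)).sub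
      (intervalIntegral.intervalIntegrable_rpow' (hexp' k hk))
  have hpair0 : IntervalIntegrable (fun t : ℝ => t^(2*p-9+a) - t^(2*p-5+a)) volume 0 1 :=
    (intervalIntegral.intervalIntegrable_rpow' hexpa).sub
      (intervalIntegral.intervalIntegrable_rpow' hexpa')
  have hL_int : IntervalIntegrable L volume 0 1 := by
    rw [hLdef]
    exact ((((hpair0.const_mul _).add ((hpair 1 (by norm_num)).const_mul _)).add
      ((hpair 2 (by norm_num)).const_mul _)).add
      ((hpair 3 (by norm_num)).const_mul _)).const_mul _
  have hcont : ContinuousOn (fun t : ℝ => betaReg t a (1-a) * (1 - t^4)) (Set.uIcc (0:ℝ) 1) := by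
    have h1 : ContinuousOn (fun t : ℝ => betaInc t a (1-a)) (Set.uIcc (0:ℝ) 1) :=
      intervalIntegral.continuousOn_primitive_interval' hψ Set.left_mem_uIcc
    exact (h1.div_const _).mul ((continuous_const.sub (continuous_pow 4)).continuousOn)
  have hF_int : IntervalIntegrable
      (fun t : ℝ => betaReg t a (1-a) * t^(2*p-9) * (1 - t^4)) volume 0 1 := by
    have h9 : (-1:ℝ) < 2*p-9 := by linarith
    have h := (intervalIntegral.intervalIntegrable_rpow' h9 (a := 0) (b := 1)).mul_continuousOn
      hcont
    have heq : (fun t : ℝ => t^(2*p-9) * (betaReg t a (1-a) * (1 - t^4)))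
        = fun t : ℝ => betaReg t a (1-a) * t^(2*p-9) * (1 - t^4) := by
      funext t; ring
    rwa [heq] at h
  have h0ne : ∀ᵐ (t : ℝ) ∂volume, t ≠ 0 := by
    have hz : (volume ({0} : Set ℝ)) = 0 := Real.volume_singleton
    filter_upwards [MeasureTheory.measure_eq_zero_iff_ae_notMem.mp hz] with t ht using by
      simpa using ht
  have hae : ∀ᵐ t ∂(volume.restrict (Set.Icc (0:ℝ) 1)), L t ≤
      betaReg t a (1-a) * t^(2*p-9) * (1 - t^4) := by
    filter_upwards [MeasureTheory.ae_restrict_mem measurableSet_Icc,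
      MeasureTheory.ae_restrict_of_ae h0ne] with t htI htne
    have ht0 : 0 < t := lt_of_le_of_ne htI.1 (Ne.symm htne)
    rcases eq_or_lt_of_le htI.2 with h1 | h1
    · rw [h1]
      simp only [hLdef]
      norm_num [Real.one_rpow]
    · have hreg : S/Real.pi * (t^a/a + t^(a+1)/(2*(a+1)) + 3*t^(a+2)/(8*(a+2))
          + 5*t^(a+3)/(16*(a+3))) ≤ betaReg t a (1-a) := by
        have hb := betaInc_lb ha12 ha1 ht0 h1
        have hπS : betaInc t a (1-a) / (Real.pi / S) = betaInc t a (1-a) * S / Real.pi :=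
          div_div_eq_mul_div _ _ _
        rw [betaReg, hBeta, hπS]
        calc S/Real.pi * (t^a/a + t^(a+1)/(2*(a+1)) + 3*t^(a+2)/(8*(a+2)) + 5*t^(a+3)/(16*(a+3)))
            = (t^a/a + t^(a+1)/(2*(a+1)) + 3*t^(a+2)/(8*(a+2)) + 5*t^(a+3)/(16*(a+3)))
              * S / Real.pi := by ring
          _ ≤ betaInc t a (1-a) * S / Real.pi := by gcongr
    -- rpow splitting
      have e0 : t^(2*p-9+a) = t^(2*p-9) * t^a := Real.rpow_add ht0 _ _
      have e0' : t^(2*p-5+a) = (t^(2*p-9) * t^a) * t^(4:ℕ) := by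
        rw [← Real.rpow_natCast t 4, ← Real.rpow_add ht0, ← Real.rpow_add ht0]
        ring_nf
      have e : ∀ c : ℝ, t^(2*p-9+(a+c)) = t^(2*p-9) * t^(a+c) := fun c => Real.rpow_add ht0 _ _
      have e' : ∀ c : ℝ, t^(2*p-5+(a+c)) = (t^(2*p-9) * t^(a+c)) * t^(4:ℕ) := by
        intro c
        rw [← Real.rpow_natCast t 4, ← Real.rpow_add ht0, ← Real.rpow_add ht0]
        ring_nf
      have hw0 : (0:ℝ) ≤ t^(2*p-9) * (1 - t^4) := by
        have h4 : t^(4:ℕ) ≤ 1 := pow_le_one₀ ht0.le h1.le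
        have := Real.rpow_nonneg ht0.le (2*p-9)
        nlinarith
      calc L t = (S/Real.pi * (t^a/a + t^(a+1)/(2*(a+1)) + 3*t^(a+2)/(8*(a+2))
              + 5*t^(a+3)/(16*(a+3)))) * (t^(2*p-9) * (1 - t^4)) := by
            rw [hLdef]
            simp only [e0, e0', e 1, e 2, e 3, e' 1, e' 2, e' 3]
            ring
        _ ≤ betaReg t a (1-a) * (t^(2*p-9) * (1 - t^4)) :=
            mul_le_mul_of_nonneg_right hreg hw0
        _ = betaReg t a (1-a) * t^(2*p-9) * (1 - t^4) := by ring
  have hmono : (∫ t in (0:ℝ)..1, L t) ≤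
      ∫ t in (0:ℝ)..1, betaReg t a (1-a) * t^(2*p-9) * (1 - t^4) :=
    intervalIntegral.integral_mono_ae_restrict (by norm_num) hL_int hF_int hae
  have hLval : (∫ t in (0:ℝ)..1, L t) = S/Real.pi * Wfun p p := by
    rw [hLdef]
    rw [intervalIntegral.integral_const_mul,
      integral_add (((hpair0.const_mul _).add ((hpair 1 (by norm_num)).const_mul _)).add
        ((hpair 2 (by norm_num)).const_mul _)) ((hpair 3 (by norm_num)).const_mul _),
      integral_add ((hpair0.const_mul _).add ((hpair 1 (by norm_num)).const_mul _))
        ((hpair 2 (by norm_num)).const_mul _),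
      integral_add (hpair0.const_mul _) ((hpair 1 (by norm_num)).const_mul _),
      intervalIntegral.integral_const_mul, intervalIntegral.integral_const_mul, intervalIntegral.integral_const_mul, intervalIntegral.integral_const_mul,
      pair_int hexpa hexpa', pair_int (hexp 1 (by norm_num)) (hexp' 1 (by norm_num)),
      pair_int (hexp 2 (by norm_num)) (hexp' 2 (by norm_num)),
      pair_int (hexp 3 (by norm_num)) (hexp' 3 (by norm_num))]
    rw [Wfun, ← ha]
    rw [show (2*p-9+a+1 : ℝ) = 2*p-8+a by ring, show (2*p-5+a+1 : ℝ) = 2*p-4+a by ring,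
      show (2*p-9+(a+1)+1 : ℝ) = 2*p-8+a+1 by ring,
      show (2*p-5+(a+1)+1 : ℝ) = 2*p-4+a+1 by ring,
      show (2*p-9+(a+2)+1 : ℝ) = 2*p-8+a+2 by ring,
      show (2*p-5+(a+2)+1 : ℝ) = 2*p-4+a+2 by ring,
      show (2*p-9+(a+3)+1 : ℝ) = 2*p-8+a+3 by ring,
      show (2*p-5+(a+3)+1 : ℝ) = 2*p-4+a+3 by ring]
  have hkey := key p hp1 hp2
  rw [← ha, ← hSdef] at hkey
  linarith [hmono, hLval, hkey]
end

section
/- Let α ∈ [0,1] or α ∈ [2,3], and let t ∈ [0,1]. Then (1−t)^α ≤ 1 − αt + (α(α−1)/2) t². -/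
open MeasureTheory intervalIntegral

private lemma taylor_aux (α : ℝ)
    (hq : ∀ s ∈ Set.Ioo (0:ℝ) 1, 0 ≤ α * (α - 1) - α * (α - 1) * (1 - s) ^ (α - 2))
    (t : ℝ) (ht0 : 0 ≤ t) (ht1 : t < 1) :
    (1 - t) ^ α ≤ 1 - α * t + (α * (α - 1) / 2) * t ^ 2 := by
  set g : ℝ → ℝ := fun s => 1 - α * s + α * (α - 1) / 2 * s ^ 2 - (1 - s) ^ α with hg
  set g₁ : ℝ → ℝ := fun s => -α + α * (α - 1) * s + α * (1 - s) ^ (α - 1) with hg1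
  have hdg : ∀ s ∈ Set.Icc 0 t, HasDerivAt g (g₁ s) s := by
    intro s hs
    have hs1 : (1:ℝ) - s ≠ 0 := by
      have := hs.2; nlinarith
    have h1 : HasDerivAt (fun s : ℝ => (1 - s) ^ α)
        ((-1) * α * (1 - s) ^ (α - 1)) s := by
      have hb : HasDerivAt (fun s : ℝ => 1 - s) (-1) s := by
        simpa using (hasDerivAt_id s).const_sub 1
      exact hb.rpow_const (Or.inl hs1)
    have h2 : HasDerivAt (fun s : ℝ => 1 - α * s + α * (α - 1) / 2 * s ^ 2)
        (-α + α * (α - 1) / 2 * (2 * s)) s := by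
      have ha : HasDerivAt (fun s : ℝ => 1 - α * s) (-α) s := by
        simpa using ((hasDerivAt_id s).const_mul α).const_sub 1
      have hb : HasDerivAt (fun s : ℝ => α * (α - 1) / 2 * s ^ 2)
          (α * (α - 1) / 2 * (2 * s)) s := by
        have := (hasDerivAt_pow 2 s).const_mul (α * (α - 1) / 2)
        simpa [mul_comm, mul_left_comm, mul_assoc] using this
      exact ha.add hb
    have := h2.sub h1
    exact this.congr_deriv (by ring)
  have hdg1 : ∀ s ∈ Set.Icc 0 t, HasDerivAt g₁
      (α * (α - 1) - α * (α - 1) * (1 - s) ^ (α - 2)) s := by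
    intro s hs
    have hs1 : (1:ℝ) - s ≠ 0 := by
      have := hs.2; nlinarith
    have hb : HasDerivAt (fun s : ℝ => 1 - s) (-1) s := by
      simpa using (hasDerivAt_id s).const_sub 1
    have h1 : HasDerivAt (fun s : ℝ => (1 - s) ^ (α - 1))
        ((-1) * (α - 1) * (1 - s) ^ (α - 1 - 1)) s := hb.rpow_const (Or.inl hs1)
    have h2 : HasDerivAt (fun s : ℝ => α * (1 - s) ^ (α - 1))
        (α * ((-1) * (α - 1) * (1 - s) ^ (α - 1 - 1))) s := h1.const_mul α
    have h3 : HasDerivAt (fun s : ℝ => -α + α * (α - 1) * s) (α * (α - 1)) s := by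
      simpa using ((hasDerivAt_id s).const_mul (α * (α - 1))).const_add (-α)
    have := h3.add h2
    exact this.congr_deriv (by rw [show α - 1 - 1 = α - 2 by ring]; ring)
  -- g₁ is monotone on [0, t]
  have hg1mono : MonotoneOn g₁ (Set.Icc 0 t) := by
    apply monotoneOn_of_deriv_nonneg (convex_Icc 0 t)
    · exact fun s hs => (hdg1 s hs).differentiableAt.continuousAt.continuousWithinAt
    · intro s hs
      rw [interior_Icc] at hs
      exact (hdg1 s (Set.mem_Icc_of_Ioo hs)).differentiableAt.differentiableWithinAt
    · intro s hs
      rw [interior_Icc] at hs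
      rw [(hdg1 s (Set.mem_Icc_of_Ioo hs)).deriv]
      exact hq s ⟨hs.1, lt_trans hs.2 ht1⟩
  have hg10 : g₁ 0 = 0 := by
    simp [hg1, Real.one_rpow]
  have hg1nonneg : ∀ s ∈ Set.Icc 0 t, 0 ≤ g₁ s := by
    intro s hs
    have := hg1mono (Set.left_mem_Icc.mpr ht0) hs hs.1
    rwa [hg10] at this
  have hgmono : MonotoneOn g (Set.Icc 0 t) := by
    apply monotoneOn_of_deriv_nonneg (convex_Icc 0 t)
    · exact fun s hs => (hdg s hs).differentiableAt.continuousAt.continuousWithinAt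
    · intro s hs
      rw [interior_Icc] at hs
      exact (hdg s (Set.mem_Icc_of_Ioo hs)).differentiableAt.differentiableWithinAt
    · intro s hs
      rw [interior_Icc] at hs
      rw [(hdg s (Set.mem_Icc_of_Ioo hs)).deriv]
      exact hg1nonneg s (Set.mem_Icc_of_Ioo hs)
  have hg0 : g 0 = 0 := by simp [hg]
  have := hgmono (Set.left_mem_Icc.mpr ht0) (Set.right_mem_Icc.mpr ht0) ht0
  rw [hg0] at this
  simp only [hg] at this
  linarith

theorem rpow_le_taylor_two (α t : ℝ)
    (hα : α ∈ Set.Icc (0:ℝ) 1 ∨ α ∈ Set.Icc (2:ℝ) 3) (ht : t ∈ Set.Icc (0:ℝ) 1) :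
    (1 - t) ^ α ≤ 1 - α * t + (α * (α - 1) / 2) * t ^ 2 := by
  obtain ⟨ht0, ht1⟩ := ht
  rcases eq_or_lt_of_le ht1 with h1 | h1
  · -- t = 1
    subst h1
    rcases eq_or_ne α 0 with h0 | h0
    · simp [h0]
    · rw [show (1:ℝ) - 1 = 0 by ring, Real.zero_rpow h0]
      rcases hα with ⟨ha0, ha1⟩ | ⟨ha2, ha3⟩
      · nlinarith
      · nlinarith
  · apply taylor_aux α _ t ht0 h1
    intro s hs
    rcases hα with ⟨ha0, ha1⟩ | ⟨ha2, ha3⟩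
    · have hr : 1 ≤ (1 - s) ^ (α - 2) := by
        apply Real.one_le_rpow_of_pos_of_le_one_of_nonpos
        · linarith [hs.2]
        · linarith [hs.1]
        · linarith
      nlinarith [mul_nonneg (mul_nonneg ha0 (by linarith : (0:ℝ) ≤ 1 - α))
        (by linarith : (0:ℝ) ≤ (1 - s) ^ (α - 2) - 1)]
    · have hr : (1 - s) ^ (α - 2) ≤ 1 := by
        apply Real.rpow_le_one (by linarith [hs.2]) (by linarith [hs.1]) (by linarith)
      have hr0 : 0 ≤ (1 - s) ^ (α - 2) := Real.rpow_nonneg (by linarith [hs.2]) _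
      nlinarith [mul_nonneg (mul_nonneg (by linarith : (0:ℝ) ≤ α) (by linarith : (0:ℝ) ≤ α - 1))
        (by linarith : (0:ℝ) ≤ 1 - (1 - s) ^ (α - 2))]
end

section
/- Let 4 < p < 6. Then condition (C) with α = 1 (that is, ∫₀¹ I_t(3/p, 1−3/p) t^{2p−9}(1−t⁴) dt − 1/8 ≤ 0) holds if and only if ½(6p − p²) B(3/p, 2p−8) − (p−2)/(p−4) + (2p−5+3/p)(2p−6+3/p)(2p−7+3/p)(2p−8+3/p) / (2(p−2)(2p−5)(2p−6)(2p−7)) ≤ 0. -/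
open MeasureTheory intervalIntegral

lemma betaIntegrand_eqOn {x y : ℝ} :
    ∀ t ∈ Set.Icc (0:ℝ) 1, ((t:ℂ) ^ ((x:ℂ)-1) * (1-(t:ℂ)) ^ ((y:ℂ)-1))
      = ((t ^ (x-1) * (1-t) ^ (y-1) : ℝ) : ℂ) := by
  intro t ht
  have h0 : (0:ℝ) ≤ t := ht.1
  have h1 : (0:ℝ) ≤ 1 - t := by linarith [ht.2]
  rw [Complex.ofReal_mul, Complex.ofReal_cpow h0, Complex.ofReal_cpow h1]
  push_cast
  ring

lemma betaIntegrand_intervalIntegrable {x y : ℝ} (hx : 0 < x) (hy : 0 < y) :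
    IntervalIntegrable (fun t : ℝ => t ^ (x - 1) * (1 - t) ^ (y - 1)) volume 0 1 := by
  have h := Complex.betaIntegral_convergent (u := (x:ℂ)) (v := (y:ℂ)) (by simpa) (by simpa)
  rw [intervalIntegrable_iff] at h ⊢
  have h2 : IntegrableOn (fun t : ℝ => ((t ^ (x-1) * (1-t) ^ (y-1) : ℝ) : ℂ))
      (Set.uIoc (0:ℝ) 1) volume := by
    refine h.congr_fun (fun t ht => ?_) measurableSet_uIoc
    refine betaIntegrand_eqOn t ?_
    rw [Set.uIoc_of_le zero_le_one] at ht
    exact ⟨ht.1.le, ht.2⟩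
  simpa [IntegrableOn] using h2.re

lemma betaFn_eq_Gamma {x y : ℝ} (hx : 0 < x) (hy : 0 < y) :
    betaFn x y = Real.Gamma x * Real.Gamma y / Real.Gamma (x + y) := by
  have hb : Complex.betaIntegral x y = ((betaFn x y : ℝ) : ℂ) := by
    rw [Complex.betaIntegral, betaFn, ← intervalIntegral.integral_ofReal]
    refine intervalIntegral.integral_congr (fun t ht => ?_)
    rw [Set.uIcc_of_le zero_le_one] at ht
    exact betaIntegrand_eqOn t ht
  have hG := Complex.Gamma_mul_Gamma_eq_betaIntegral
    (s := (x:ℂ)) (t := (y:ℂ)) (by simpa) (by simpa)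
  rw [hb, ← Complex.ofReal_add, Complex.Gamma_ofReal, Complex.Gamma_ofReal,
    Complex.Gamma_ofReal, ← Complex.ofReal_mul, ← Complex.ofReal_mul] at hG
  have := Complex.ofReal_inj.mp hG
  have hGxy : Real.Gamma (x + y) ≠ 0 := (Real.Gamma_pos_of_pos (by linarith)).ne'
  field_simp
  linarith [this]

-- continuity of the integrand on Ioo 0 1
lemma betaIntegrand_continuousOn {x y : ℝ} :
    ContinuousOn (fun t : ℝ => t ^ (x - 1) * (1 - t) ^ (y - 1)) (Set.Ioo 0 1) := by
  intro t ht
  have h1 : ContinuousAt (fun t : ℝ => t ^ (x - 1)) t :=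
    Real.continuousAt_rpow_const t (x-1) (Or.inl ht.1.ne')
  have h2 : ContinuousAt (fun t : ℝ => (1 - t) ^ (y - 1)) t := by
    have : ContinuousAt (fun s : ℝ => s ^ (y - 1)) (1 - t) :=
      Real.continuousAt_rpow_const _ _ (Or.inl (by linarith [ht.2]))
    exact this.comp (by fun_prop)
  exact (h1.mul h2).continuousWithinAt

lemma betaInc_continuousOn {x y : ℝ} (hx : 0 < x) (hy : 0 < y) :
    ContinuousOn (fun T => betaInc T x y) (Set.Icc 0 1) := by
  have h := betaIntegrand_intervalIntegrable hx hy
  have h2 : IntegrableOn (fun t : ℝ => t ^ (x - 1) * (1 - t) ^ (y - 1))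
      (Set.uIcc (0:ℝ) 1) volume := by
    rw [Set.uIcc_of_le zero_le_one, integrableOn_Icc_iff_integrableOn_Ioc]
    simpa [intervalIntegrable_iff, Set.uIoc_of_le zero_le_one] using h
  simpa [Set.uIcc_of_le zero_le_one, betaInc] using
    intervalIntegral.continuousOn_primitive_interval h2

lemma betaInc_hasDerivAt {x y t : ℝ} (hx : 0 < x) (hy : 0 < y) (ht : t ∈ Set.Ioo (0:ℝ) 1) :
    HasDerivAt (fun T => betaInc T x y) (t ^ (x - 1) * (1 - t) ^ (y - 1)) t := by
  have h := (betaIntegrand_intervalIntegrable hx hy).mono_set (c := 0) (d := t)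
    (by rw [Set.uIcc_of_le zero_le_one, Set.uIcc_of_le ht.1.le]
        exact Set.Icc_subset_Icc le_rfl ht.2.le)
  exact intervalIntegral.integral_hasDerivAt_right h
    (betaIntegrand_continuousOn.stronglyMeasurableAtFilter isOpen_Ioo t ht)
    (betaIntegrand_continuousOn.continuousAt (isOpen_Ioo.mem_nhds ht))

lemma key_byparts {a b : ℝ} (ha : 0 < a) (ha1 : a < 1) (hb : 0 < b) :
    ∫ t in (0:ℝ)..1, betaInc t a (1-a) * (t ^ (b-1) * (1 - t^4))
      = betaFn a (1-a) * (1/b - 1/(b+4))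
        - (betaFn (a+b) (1-a) / b - betaFn (a+b+4) (1-a) / (b+4)) := by
  have hy : 0 < 1 - a := by linarith
  set u : ℝ → ℝ := fun T => betaInc T a (1-a) with hu
  set φ : ℝ → ℝ := fun t => t ^ (a-1) * (1-t) ^ ((1-a)-1) with hφ
  set v : ℝ → ℝ := fun t => t ^ b / b - t ^ (b+4) / (b+4) with hv
  set v' : ℝ → ℝ := fun t => t ^ (b-1) - t ^ (b+3) with hv'
  set g : ℝ → ℝ := fun t => (t ^ ((a+b)-1) * (1-t) ^ ((1-a)-1)) / b
      - (t ^ ((a+b+4)-1) * (1-t) ^ ((1-a)-1)) / (b+4) with hg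
  -- integrability pieces
  have hv'int : IntervalIntegrable v' volume 0 1 :=
    (intervalIntegrable_rpow' (by linarith)).sub (intervalIntegrable_rpow' (by linarith))
  have hucont : ContinuousOn u (Set.uIcc (0:ℝ) 1) := by
    rw [Set.uIcc_of_le zero_le_one]; exact betaInc_continuousOn ha hy
  have huv' : IntervalIntegrable (fun t => u t * v' t) volume 0 1 :=
    hv'int.continuousOn_mul hucont
  have hgint : IntervalIntegrable g volume 0 1 :=
    ((betaIntegrand_intervalIntegrable (by linarith : (0:ℝ) < a + b) hy).div_const b).sub
      ((betaIntegrand_intervalIntegrable (by linarith : (0:ℝ) < a + b + 4) hy).div_const (b+4))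
  have haeg : ∀ t ∈ Set.uIoc (0:ℝ) 1, g t = φ t * v t := by
    intro t ht
    rw [Set.uIoc_of_le zero_le_one] at ht
    have ht0 : 0 < t := ht.1
    have e1 : t ^ ((a+b)-1) = t ^ (a-1) * t ^ b := by
      rw [← Real.rpow_add ht0]; ring_nf
    have e2 : t ^ ((a+b+4)-1) = t ^ (a-1) * t ^ (b+4) := by
      rw [← Real.rpow_add ht0]; ring_nf
    simp only [hg, hφ, hv, e1, e2]; ring
  have hφv : IntervalIntegrable (fun t => φ t * v t) volume 0 1 :=
    hgint.congr haeg
  -- derivative of F = u * v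
  have hder : ∀ t ∈ Set.Ioo (0:ℝ) 1,
      HasDerivAt (fun t => u t * v t) (φ t * v t + u t * v' t) t := by
    intro t ht
    have hdu : HasDerivAt u (φ t) t := betaInc_hasDerivAt ha hy ht
    have hdv : HasDerivAt v (v' t) t := by
      have h1 : HasDerivAt (fun t : ℝ => t ^ b / b) (t ^ (b-1)) t := by
        have := (Real.hasDerivAt_rpow_const (x := t) (p := b) (Or.inl ht.1.ne')).div_const b
        refine this.congr_deriv ?_
        rw [mul_div_cancel_left₀ _ hb.ne']
      have h2 : HasDerivAt (fun t : ℝ => t ^ (b+4) / (b+4)) (t ^ (b+3)) t := by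
        have := (Real.hasDerivAt_rpow_const (x := t) (p := b+4) (Or.inl ht.1.ne')).div_const (b+4)
        refine this.congr_deriv ?_
        have hb4 : b + 4 - 1 = b + 3 := by ring
        rw [hb4]
        rw [mul_div_cancel_left₀ _ (by linarith : b + 4 ≠ 0)]
      exact h1.sub h2
    exact hdu.mul hdv
  have hcontF : ContinuousOn (fun t => u t * v t) (Set.Icc (0:ℝ) 1) := by
    refine (betaInc_continuousOn ha hy).mul (fun t ht => ?_)
    have h1 : ContinuousAt (fun t : ℝ => t ^ b) t :=
      Real.continuousAt_rpow_const t b (Or.inr hb.le)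
    have h2 : ContinuousAt (fun t : ℝ => t ^ (b+4)) t :=
      Real.continuousAt_rpow_const t (b+4) (Or.inr (by linarith))
    exact ((h1.div_const b).sub (h2.div_const (b+4))).continuousWithinAt
  have hFTC := intervalIntegral.integral_eq_sub_of_hasDerivAt_of_le zero_le_one
    hcontF hder (hφv.add huv')
  rw [intervalIntegral.integral_add hφv huv'] at hFTC
  -- evaluate endpoints
  have hF1 : u 1 * v 1 = betaFn a (1-a) * (1/b - 1/(b+4)) := by
    have : u 1 = betaFn a (1-a) := rfl
    rw [this, hv]
    simp [Real.one_rpow]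
  have hF0 : u 0 * v 0 = 0 := by
    have : u 0 = 0 := intervalIntegral.integral_same
    rw [this, zero_mul]
  rw [hF1, hF0, sub_zero] at hFTC
  -- identify ∫ φ v with betas
  have hint_g : ∫ t in (0:ℝ)..1, φ t * v t
      = betaFn (a+b) (1-a) / b - betaFn (a+b+4) (1-a) / (b+4) := by
    rw [← intervalIntegral.integral_congr_ae (g := fun t => φ t * v t) (f := g)
      (ae_of_all _ haeg)]
    rw [intervalIntegral.integral_sub ((betaIntegrand_intervalIntegrable
        (by linarith : (0:ℝ) < a + b) hy).div_const b)
        ((betaIntegrand_intervalIntegrable (by linarith : (0:ℝ) < a + b + 4) hy).div_const (b+4)),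
      intervalIntegral.integral_div, intervalIntegral.integral_div]
    rfl
  -- identify ∫ u v' with the LHS
  have hlhs : ∫ t in (0:ℝ)..1, betaInc t a (1-a) * (t ^ (b-1) * (1 - t^4))
      = ∫ t in (0:ℝ)..1, u t * v' t := by
    refine intervalIntegral.integral_congr_ae (ae_of_all _ ?_)
    intro t ht
    rw [Set.uIoc_of_le zero_le_one] at ht
    have e : t ^ (b+3) = t ^ (b-1) * t ^ (4:ℕ) := by
      rw [← Real.rpow_natCast t 4, ← Real.rpow_add ht.1]; congr 1; ring
    simp only [hv', e]; ring
  rw [hlhs]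
  rw [hint_g] at hFTC
  linarith [hFTC]

lemma iff_of_eq_pos_mul {X Y C : ℝ} (hC : 0 < C) (h : Y = C * X) : X ≤ 0 ↔ Y ≤ 0 := by
  subst h
  constructor <;> intro h2 <;> nlinarith


theorem condC_alpha_one_iff (p : ℝ) (hp1 : 4 < p) (hp2 : p < 6) :
    ((∫ t in (0:ℝ)..1, betaReg t (3 / p) (1 - 3 / p) * t ^ (2 * p - 9) * (1 - t ^ 4))
        - 1 / 8 ≤ 0 ↔
      1 / 2 * (6 * p - p ^ 2) * betaFn (3 / p) (2 * p - 8) - (p - 2) / (p - 4)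
        + (2 * p - 5 + 3 / p) * (2 * p - 6 + 3 / p) * (2 * p - 7 + 3 / p) *
            (2 * p - 8 + 3 / p) /
          (2 * (p - 2) * (2 * p - 5) * (2 * p - 6) * (2 * p - 7)) ≤ 0) := by
  have hp0 : 0 < p := by linarith
  set a : ℝ := 3 / p with ha_def
  set b : ℝ := 2 * p - 8 with hb_def
  have ha : 0 < a := by rw [ha_def]; positivity
  have ha1 : a < 1 := by rw [ha_def, div_lt_one hp0]; linarith
  have hb : 0 < b := by rw [hb_def]; linarith
  have h1a : 0 < 1 - a := by linarith
  have hab : 0 < a + b := by linarith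
  -- Step 1: pull out the constant and apply integration by parts
  have h1 : (∫ t in (0:ℝ)..1, betaReg t a (1 - a) * t ^ (2 * p - 9) * (1 - t ^ 4))
      = (∫ t in (0:ℝ)..1, betaInc t a (1-a) * (t ^ (b-1) * (1 - t^4))) / betaFn a (1-a) := by
    rw [← intervalIntegral.integral_div]
    refine intervalIntegral.integral_congr (fun t ht => ?_)
    have e : 2 * p - 9 = b - 1 := by rw [hb_def]; ring
    rw [e]
    simp only [betaReg]
    ring
  rw [h1, key_byparts ha ha1 hb]
  -- Step 2: Gamma computations
  have hGa := Real.Gamma_pos_of_pos ha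
  have hG1a := Real.Gamma_pos_of_pos h1a
  have hGb := Real.Gamma_pos_of_pos hb
  have hGab := Real.Gamma_pos_of_pos hab
  have hB : betaFn a (1-a) = Real.Gamma a * Real.Gamma (1-a) := by
    rw [betaFn_eq_Gamma ha h1a, show a + (1-a) = 1 by ring, Real.Gamma_one, div_one]
  have hbeta1 : betaFn (a+b) (1-a)
      = Real.Gamma (a+b) * Real.Gamma (1-a) / (b * Real.Gamma b) := by
    rw [betaFn_eq_Gamma hab h1a, show (a+b) + (1-a) = b + 1 by ring,
      Real.Gamma_add_one hb.ne']
  have eb5 : Real.Gamma (b+5)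
      = (b+4) * ((b+3) * ((b+2) * ((b+1) * (b * Real.Gamma b)))) := by
    have e1 : Real.Gamma (b+1) = b * Real.Gamma b := Real.Gamma_add_one hb.ne'
    have e2 : Real.Gamma (b+2) = (b+1) * Real.Gamma (b+1) := by
      rw [show b+2 = (b+1)+1 by ring, Real.Gamma_add_one (by linarith)]
    have e3 : Real.Gamma (b+3) = (b+2) * Real.Gamma (b+2) := by
      rw [show b+3 = (b+2)+1 by ring, Real.Gamma_add_one (by linarith)]
    have e4 : Real.Gamma (b+4) = (b+3) * Real.Gamma (b+3) := by
      rw [show b+4 = (b+3)+1 by ring, Real.Gamma_add_one (by linarith)]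
    have e5 : Real.Gamma (b+5) = (b+4) * Real.Gamma (b+4) := by
      rw [show b+5 = (b+4)+1 by ring, Real.Gamma_add_one (by linarith)]
    rw [e5, e4, e3, e2, e1]
  have eab4 : Real.Gamma (a+b+4)
      = (a+b+3) * ((a+b+2) * ((a+b+1) * ((a+b) * Real.Gamma (a+b)))) := by
    have e1 : Real.Gamma (a+b+1) = (a+b) * Real.Gamma (a+b) := by
      rw [show a+b+1 = (a+b)+1 by ring, Real.Gamma_add_one hab.ne']
    have e2 : Real.Gamma (a+b+2) = (a+b+1) * Real.Gamma (a+b+1) := by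
      rw [show a+b+2 = (a+b+1)+1 by ring, Real.Gamma_add_one (by linarith)]
    have e3 : Real.Gamma (a+b+3) = (a+b+2) * Real.Gamma (a+b+2) := by
      rw [show a+b+3 = (a+b+2)+1 by ring, Real.Gamma_add_one (by linarith)]
    have e4 : Real.Gamma (a+b+4) = (a+b+3) * Real.Gamma (a+b+3) := by
      rw [show a+b+4 = (a+b+3)+1 by ring, Real.Gamma_add_one (by linarith)]
    rw [e4, e3, e2, e1]
  have hbeta2 : betaFn (a+b+4) (1-a)
      = ((a+b+3) * ((a+b+2) * ((a+b+1) * ((a+b) * Real.Gamma (a+b))))) * Real.Gamma (1-a)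
        / ((b+4) * ((b+3) * ((b+2) * ((b+1) * (b * Real.Gamma b))))) := by
    rw [betaFn_eq_Gamma (by linarith) h1a, show (a+b+4) + (1-a) = b + 5 by ring, eb5, eab4]
  have hB2 : betaFn a b = Real.Gamma a * Real.Gamma b / Real.Gamma (a+b) :=
    betaFn_eq_Gamma ha hb
  have hB2pos : 0 < betaFn a b := by rw [hB2]; positivity
  refine iff_of_eq_pos_mul (C := 4 * (p-4) * (p-2) * betaFn a b) (mul_pos (by nlinarith : (0:ℝ) < 4 * (p-4) * (p-2)) hB2pos) ?_
  rw [hB, hbeta1, hbeta2, hB2]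
  have h4 : p - 4 ≠ 0 := by linarith
  have h2 : p - 2 ≠ 0 := by linarith
  have h2p5 : 2*p - 5 ≠ 0 := by linarith
  have h2p6 : 2*p - 6 ≠ 0 := by linarith
  have h2p7 : 2*p - 7 ≠ 0 := by linarith
  have hbne : b ≠ 0 := hb.ne'
  have hb4 : b + 4 ≠ 0 := by linarith
  have hb1 : b + 1 ≠ 0 := by linarith
  have hb2 : b + 2 ≠ 0 := by linarith
  have hb3 : b + 3 ≠ 0 := by linarith
  have hGane : Real.Gamma a ≠ 0 := hGa.ne'
  have hG1ane : Real.Gamma (1-a) ≠ 0 := hG1a.ne'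
  have hGbne : Real.Gamma b ≠ 0 := hGb.ne'
  have hGabne : Real.Gamma (a+b) ≠ 0 := hGab.ne'
  have hbp : b = 2 * p - 8 := hb_def
  rw [hbp] at hbne hb4 hb1 hb2 hb3 hGbne hGabne ⊢
  field_simp
  ring
end

section
/- Let α ≥ 0 and 2 + 2α < p < 2(2+α), and define F_{α,p}(s) = B((2+α)/p, 1−(2+α)/p) · H_{α,p}(s) − ∫₀¹ ψ_{α,p}(t) K_{α,p}(s,t) dt for s ∈ [0,1]. Then for every s ∈ (0,1), F_{α,p} is differentiable at s with derivative F'_{α,p}(s) = 2 s^{2p−4α−5} (1−s⁴)^α · (s^{8+4α−2p} B((2+α)/p, 1−(2+α)/p) − ∫₀^s ψ_{α,p}(t) dt). -/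
open MeasureTheory intervalIntegral

section AuxHasDerivAtF

open Filter Set

/-- Termwise differentiation of a series on an open set, with a uniform summable bound
on the derivatives. -/
lemma hasDerivAt_tsum_on {f f' : ℕ → ℝ → ℝ} {s : Set ℝ} (hs : IsOpen s) {u : ℕ → ℝ}
    (hu : Summable u)
    (hf : ∀ k, ∀ x ∈ s, HasDerivAt (f k) (f' k x) x)
    (hb : ∀ k, ∀ x ∈ s, |f' k x| ≤ u k)
    (hsum : ∀ x ∈ s, Summable fun k => f k x)
    {x : ℝ} (hx : x ∈ s) :
    HasDerivAt (fun y => ∑' k, f k y) (∑' k, f' k x) x := by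
  have huni : TendstoUniformlyOn (fun (T : Finset ℕ) y => ∑ k ∈ T, f' k y)
      (fun y => ∑' k, f' k y) atTop s :=
    tendstoUniformlyOn_tsum hu (fun k y hy => by simpa [Real.norm_eq_abs] using hb k y hy)
  exact hasDerivAt_of_tendstoUniformlyOn hs huni
    (Filter.Eventually.of_forall fun T y hy => HasDerivAt.fun_sum fun k _ => hf k y hy)
    (fun y hy => (hsum y hy).hasSum) hx

lemma gBinom_zero (α : ℝ) : gBinom α 0 = 1 := by simp [gBinom]

lemma gBinom_succ (α : ℝ) (k : ℕ) :
    gBinom α (k + 1) = gBinom α k * (α - k) / (k + 1) := by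
  rw [gBinom, gBinom, Finset.prod_range_succ, Nat.factorial_succ]
  push_cast
  rw [div_mul_eq_mul_div, div_div, mul_comm ((k:ℝ) + 1) (k.factorial : ℝ)]

lemma gBinom_rec (α : ℝ) (k : ℕ) :
    ((k:ℝ) + 1) * gBinom α (k + 1) = (α - k) * gBinom α k := by
  have hk : ((k : ℝ) + 1) ≠ 0 := by positivity
  rw [gBinom_succ]
  field_simp

lemma summable_abs_gBinom {α : ℝ} (hα : 0 ≤ α) : Summable (fun k => |gBinom α k|) := by
  rcases eq_or_lt_of_le hα with h0 | hpos
  · have hz : ∀ k : ℕ, |gBinom α (k + 1)| = 0 := by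
      intro k
      have h1 : gBinom α (k + 1) = 0 := by
        simp only [gBinom]
        rw [Finset.prod_eq_zero (Finset.mem_range.2 (Nat.succ_pos k)) (by simp [← h0])]
        simp
      simp [h1]
    rw [← summable_nat_add_iff 1]
    simpa [hz] using (summable_zero : Summable (fun _ : ℕ => (0:ℝ)))
  · set N := ⌈α⌉₊ with hN
    have key : ∀ i : ℕ, α * |gBinom α (N + i)| =
        ((N + i : ℕ) : ℝ) * |gBinom α (N + i)| -
          (((N + i : ℕ) : ℝ) + 1) * |gBinom α (N + i + 1)| := by
      intro i
      have hk : α ≤ ((N + i : ℕ) : ℝ) := by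
        have h1 : α ≤ (N : ℝ) := Nat.le_ceil α
        have h2 : (N : ℝ) ≤ ((N + i : ℕ) : ℝ) := by exact_mod_cast Nat.le_add_right N i
        linarith
      have hk1 : (((N + i : ℕ) : ℝ) + 1) ≠ 0 := by positivity
      have habs : |gBinom α (N + i + 1)| =
          |gBinom α (N + i)| * (((N + i : ℕ) : ℝ) - α) / (((N + i : ℕ) : ℝ) + 1) := by
        rw [gBinom_succ, abs_div, abs_mul,
          abs_of_nonneg (by positivity : (0:ℝ) ≤ ((N + i : ℕ) : ℝ) + 1),
          abs_of_nonpos (by linarith : α - ((N + i : ℕ) : ℝ) ≤ 0)]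
        ring
      rw [habs]
      field_simp
      ring
    have hsum : ∀ n, ∑ i ∈ Finset.range n, α * |gBinom α (N + i)| ≤
        ((N : ℕ) : ℝ) * |gBinom α N| := by
      intro n
      have htel := Finset.sum_range_sub'
        (fun i => ((N + i : ℕ) : ℝ) * |gBinom α (N + i)|) n
      have h1 : ∑ i ∈ Finset.range n, α * |gBinom α (N + i)| =
          ((N + 0 : ℕ) : ℝ) * |gBinom α (N + 0)| -
            ((N + n : ℕ) : ℝ) * |gBinom α (N + n)| := by
        rw [← htel]
        refine Finset.sum_congr rfl fun i _ => ?_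
        rw [key i]
        push_cast
        ring_nf
      rw [h1]
      have h2 : (0:ℝ) ≤ ((N + n : ℕ) : ℝ) * |gBinom α (N + n)| := by positivity
      simp only [Nat.add_zero]
      linarith
    have h1 : Summable (fun i => α * |gBinom α (N + i)|) :=
      summable_of_sum_range_le (fun i => by positivity) hsum
    have h2 : Summable (fun i => |gBinom α (N + i)|) := by
      have h3 := h1.mul_left α⁻¹
      simpa [← mul_assoc, inv_mul_cancel₀ hpos.ne'] using h3
    have h2' : Summable (fun i => |gBinom α (i + N)|) := by
      simpa [Nat.add_comm] using h2
    exact (summable_nat_add_iff N).mp h2'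

lemma gBinom_mul_pow_summable {α : ℝ} (hα : 0 ≤ α) {y : ℝ} (hy : |y| ≤ 1) :
    Summable (fun k : ℕ => gBinom α k * (-1) ^ k * y ^ k) := by
  refine Summable.of_norm (Summable.of_nonneg_of_le (fun k => norm_nonneg _)
    (fun k => ?_) (summable_abs_gBinom hα))
  rw [Real.norm_eq_abs, abs_mul, abs_mul, abs_pow, abs_pow, abs_neg, abs_one, one_pow, mul_one]
  calc |gBinom α k| * |y| ^ k ≤ |gBinom α k| * 1 := by
        gcongr
        exact pow_le_one₀ (abs_nonneg y) hy
    _ = |gBinom α k| := mul_one _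

/-- The generalized binomial theorem: for `0 ≤ x < 1` and `α ≥ 0`,
`(1-x)^α = ∑ binom(α,k) (-x)^k`. -/
lemma hasSum_binomial {α : ℝ} (hα : 0 ≤ α) {x : ℝ} (hx0 : 0 ≤ x) (hx1 : x < 1) :
    HasSum (fun k : ℕ => gBinom α k * (-1) ^ k * x ^ k) ((1 - x) ^ α) := by
  set C := ∑' k, |gBinom α k| with hC
  have hCs := summable_abs_gBinom hα
  set r : ℝ := (x + 1) / 2 with hr
  have hr0 : 0 < r := by rw [hr]; linarith
  have hr1 : r < 1 := by rw [hr]; linarith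
  have hxr : x < r := by rw [hr]; linarith
  set s : Set ℝ := Ioo (-r) r with hsdef
  have hs : IsOpen s := isOpen_Ioo
  set f : ℕ → ℝ → ℝ := fun k y => gBinom α k * (-1) ^ k * y ^ k with hf
  set f' : ℕ → ℝ → ℝ := fun k y => gBinom α k * (-1) ^ k * ((k : ℝ) * y ^ (k - 1)) with hf'
  have hderiv : ∀ k, ∀ y ∈ s, HasDerivAt (f k) (f' k y) y := fun k y _ =>
    (hasDerivAt_pow k y).const_mul _
  set u : ℕ → ℝ := fun k => C / r * ((k : ℝ) * r ^ k) with hu'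
  have hu : Summable u := by
    have h1 : Summable (fun k : ℕ => (k : ℝ) ^ 1 * r ^ k) :=
      summable_pow_mul_geometric_of_norm_lt_one 1
        (by rw [Real.norm_eq_abs, abs_of_pos hr0]; exact hr1)
    have h2 := h1.mul_left (C / r)
    simpa [hu', pow_one] using h2
  have habsC : ∀ k, |gBinom α k| ≤ C := fun k => Summable.le_tsum hCs k (fun j _ => abs_nonneg _)
  have hC0 : 0 ≤ C := tsum_nonneg fun k => abs_nonneg _
  have hbound : ∀ k, ∀ y ∈ s, |f' k y| ≤ u k := by
    intro k y hy
    have h1 : |y| ≤ r := by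
      rw [abs_le]; exact ⟨hy.1.le, hy.2.le⟩
    rcases k with _ | j
    · simp [hf', hu']
    · have h2 : |f' (j+1) y| = |gBinom α (j+1)| * (((j:ℝ)+1) * |y| ^ j) := by
        simp only [hf']
        rw [abs_mul, abs_mul, abs_mul, abs_pow, abs_pow, abs_neg, abs_one, one_pow, mul_one,
          Nat.add_sub_cancel]
        push_cast
        rw [abs_of_nonneg (by positivity : (0:ℝ) ≤ (j:ℝ)+1)]
      rw [h2]
      have h3 : |gBinom α (j+1)| * (((j:ℝ)+1) * |y| ^ j) ≤ C * (((j:ℝ)+1) * r ^ j) := by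
        have hyj : |y| ^ j ≤ r ^ j := pow_le_pow_left₀ (abs_nonneg y) h1 j
        have := habsC (j+1)
        gcongr
      refine h3.trans (le_of_eq ?_)
      rw [hu']
      have hrp : r ^ (j+1) = r ^ j * r := pow_succ r j
      push_cast
      rw [hrp]
      field_simp
  have hsumf : ∀ y ∈ s, Summable (fun k => f k y) := by
    intro y hy
    refine gBinom_mul_pow_summable hα ?_
    rw [abs_le]
    constructor
    · linarith [hy.1]
    · linarith [hy.2]
  have hg : ∀ y ∈ s, HasDerivAt (fun z => ∑' k, f k z) (∑' k, f' k y) y :=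
    fun y hy => hasDerivAt_tsum_on hs hu hderiv hbound hsumf hy
  set g : ℝ → ℝ := fun z => ∑' k, f k z with hgdef
  have hODE : ∀ y ∈ s, (1 - y) * (∑' k, f' k y) + α * g y = 0 := by
    intro y hy
    have hsum0 : HasSum (fun k => f k y) (g y) := (hsumf y hy).hasSum
    have hsum1 : Summable (fun k => f' k y) := by
      refine Summable.of_norm (Summable.of_nonneg_of_le (fun k => norm_nonneg _)
        (fun k => ?_) hu)
      rw [Real.norm_eq_abs]; exact hbound k y hy
    have hd : HasSum (fun k => f' k y) (∑' k, f' k y) := hsum1.hasSum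
    have hshift : HasSum (fun k => f' (k + 1) y) (∑' k, f' k y) := by
      have h0 : f' 0 y = 0 := by simp [hf']
      refine (hasSum_nat_add_iff (f := fun k => f' k y) (g := ∑' k, f' k y) 1).2 ?_
      simpa [h0] using hd
    have h2 : HasSum (fun k => y * f' k y) (y * ∑' k, f' k y) := hd.mul_left y
    have h3 : HasSum (fun k => α * f k y) (α * g y) := hsum0.mul_left α
    have comb := (h3.sub h2).add hshift
    have hzero : ∀ k : ℕ, α * f k y - y * f' k y + f' (k + 1) y = 0 := by
      intro k
      cases k with
      | zero =>
        have h1 : gBinom α 1 = α := by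
          simp [gBinom, Nat.factorial]
        simp only [hf, hf', gBinom_zero, h1, Nat.cast_zero, Nat.cast_one, pow_zero, pow_one,
          Nat.zero_add]
        norm_num
      | succ j =>
        have hrec2 := gBinom_rec α (j+1)
        push_cast at hrec2
        simp only [hf, hf', Nat.add_sub_cancel]
        push_cast
        linear_combination ((-1:ℝ)^j * y^(j+1)) * hrec2
    have hfun : (fun k : ℕ => α * f k y - y * f' k y + f' (k + 1) y) = fun _ => (0:ℝ) :=
      funext hzero
    rw [hfun] at comb
    have hval := comb.unique hasSum_zero
    linarith [hval]
  -- the quotient g(y) * (1-y)^(-α) is constant on [0, x]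
  have hsub : Icc (0:ℝ) x ⊆ s := by
    intro y hy
    exact ⟨lt_of_lt_of_le (by linarith : -r < 0) hy.1, lt_of_le_of_lt hy.2 hxr⟩
  have hφ : ∀ y ∈ Icc (0:ℝ) x, HasDerivAt (fun z => g z * (1 - z) ^ (-α)) 0 y := by
    intro y hy
    have hys : y ∈ s := hsub hy
    have h1y : (0:ℝ) < 1 - y := by
      have : y ≤ x := hy.2
      linarith
    have hg' := hg y hys
    have hr' : HasDerivAt (fun z : ℝ => (1 - z) ^ (-α))
        ((-1) * (-α) * (1 - y) ^ (-α - 1)) y := by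
      have hin : HasDerivAt (fun z : ℝ => 1 - z) (-1) y := by
        simpa using (hasDerivAt_id y).const_sub 1
      exact hin.rpow_const (Or.inl h1y.ne')
    have hmul := hg'.mul hr'
    refine hmul.congr_deriv ?_
    have hODEy := hODE y hys
    have hsplit : (1 - y) ^ (-α) = (1 - y) ^ (-α - 1) * (1 - y) := by
      rw [← Real.rpow_add_one h1y.ne' (-α - 1)]
      congr 1
      ring
    rw [hsplit]
    linear_combination ((1 - y) ^ (-α - 1)) * hODEy
  have hconst := constant_of_has_deriv_right_zero
    (f := fun z => g z * (1 - z) ^ (-α)) (a := 0) (b := x)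
    (fun y hy => ((hφ y hy).continuousAt).continuousWithinAt)
    (fun y hy => (hφ y (Ico_subset_Icc_self hy)).hasDerivWithinAt)
  have hx' := hconst x (right_mem_Icc.2 hx0)
  have hg0 : g 0 = 1 := by
    have hone : HasSum (fun k => f k 0) (f 0 0) := by
      refine hasSum_single 0 ?_
      intro k hk
      simp [hf, zero_pow hk]
    have hf00 : f 0 0 = 1 := by simp [hf, gBinom_zero]
    have hg00 : g 0 = ∑' k, f k 0 := rfl
    rw [hg00, hone.tsum_eq, hf00]
  have h1x : (0:ℝ) < 1 - x := by linarith
  have hxval : g x * (1 - x) ^ (-α) = 1 := by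
    rw [hx', hg0]
    norm_num [Real.one_rpow]
  have hgx : g x = (1 - x) ^ α := by
    have hne : (1 - x) ^ α ≠ 0 := (Real.rpow_pos_of_pos h1x α).ne'
    have : (1 - x) ^ (-α) = ((1 - x) ^ α)⁻¹ := by
      rw [Real.rpow_neg h1x.le]
    rw [this] at hxval
    field_simp at hxval
    linarith [hxval]
  have hfin : HasSum (fun k => f k x) (g x) :=
    (hsumf x (hsub (right_mem_Icc.2 hx0))).hasSum
  rw [hgx] at hfin
  exact hfin

/-- The function of which `Kfun` is the evaluation at `max (s^2) (t^2)`. -/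
noncomputable def Vfun (α p m : ℝ) : ℝ :=
  ∑' k : ℕ, gBinom α k * (-1) ^ k * m ^ (p - 2 * α - 2 + 2 * (k : ℝ)) / (p - 2 * α - 2 + 2 * k)

lemma Kfun_eq_Vfun (α p s t : ℝ) : Kfun α p s t = Vfun α p (max (s ^ 2) (t ^ 2)) := rfl

lemma V_term_bound {α p : ℝ} (he : 0 < p - 2 * α - 2) {m : ℝ} (hm0 : 0 < m) (hm1 : m ≤ 1)
    (k : ℕ) :
    |gBinom α k * (-1) ^ k * m ^ (p - 2 * α - 2 + 2 * (k : ℝ)) / (p - 2 * α - 2 + 2 * k)|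
      ≤ |gBinom α k| / (p - 2 * α - 2) := by
  have hk0 : (0:ℝ) ≤ (k:ℝ) := Nat.cast_nonneg k
  have hq : 0 < p - 2 * α - 2 + 2 * (k : ℝ) := by linarith
  rw [abs_div, abs_mul, abs_mul, abs_pow, abs_neg, abs_one, one_pow, mul_one,
    abs_of_pos hq, Real.abs_rpow_of_nonneg hm0.le, abs_of_pos hm0]
  have hb1 : m ^ (p - 2 * α - 2 + 2 * (k : ℝ)) ≤ 1 := Real.rpow_le_one hm0.le hm1 hq.le
  calc |gBinom α k| * m ^ (p - 2 * α - 2 + 2 * (k : ℝ)) / (p - 2 * α - 2 + 2 * (k : ℝ))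
      ≤ |gBinom α k| * 1 / (p - 2 * α - 2) :=
        div_le_div₀ (by positivity) (mul_le_mul_of_nonneg_left hb1 (abs_nonneg _)) he
          (by linarith)
    _ = |gBinom α k| / (p - 2 * α - 2) := by rw [mul_one]

lemma summable_V {α p : ℝ} (hα : 0 ≤ α) (he : 0 < p - 2 * α - 2) {m : ℝ}
    (hm0 : 0 < m) (hm1 : m ≤ 1) :
    Summable (fun k : ℕ =>
      gBinom α k * (-1) ^ k * m ^ (p - 2 * α - 2 + 2 * (k : ℝ)) / (p - 2 * α - 2 + 2 * k)) := by
  refine Summable.of_norm (Summable.of_nonneg_of_le (fun k => norm_nonneg _) (fun k => ?_)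
    ((summable_abs_gBinom hα).div_const (p - 2 * α - 2)))
  rw [Real.norm_eq_abs]
  exact V_term_bound he hm0 hm1 k

lemma abs_Vfun_le {α p : ℝ} (hα : 0 ≤ α) (he : 0 < p - 2 * α - 2) {m : ℝ}
    (hm0 : 0 < m) (hm1 : m ≤ 1) :
    |Vfun α p m| ≤ (∑' k, |gBinom α k|) / (p - 2 * α - 2) := by
  have hs := summable_V hα he hm0 hm1 (p := p)
  have h1 : |Vfun α p m| ≤ ∑' k : ℕ,
      |gBinom α k * (-1) ^ k * m ^ (p - 2 * α - 2 + 2 * (k : ℝ)) / (p - 2 * α - 2 + 2 * k)| := by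
    exact norm_tsum_le_tsum_norm (f := fun k : ℕ =>
      gBinom α k * (-1) ^ k * m ^ (p - 2 * α - 2 + 2 * (k : ℝ)) / (p - 2 * α - 2 + 2 * k)) hs.abs
  refine h1.trans ?_
  calc (∑' k : ℕ,
      |gBinom α k * (-1) ^ k * m ^ (p - 2 * α - 2 + 2 * (k : ℝ)) / (p - 2 * α - 2 + 2 * k)|)
      ≤ ∑' k : ℕ, |gBinom α k| / (p - 2 * α - 2) :=
        Summable.tsum_le_tsum (fun k => V_term_bound he hm0 hm1 k) hs.abs
          ((summable_abs_gBinom hα).div_const _)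
    _ = (∑' k, |gBinom α k|) / (p - 2 * α - 2) := by rw [tsum_div_const]

lemma hasDerivAt_Vfun {α p : ℝ} (hα : 0 ≤ α) (he : 0 < p - 2 * α - 2) {m : ℝ}
    (hm : m ∈ Set.Ioo (0:ℝ) 1) :
    HasDerivAt (Vfun α p) (m ^ (p - 2 * α - 3) * (1 - m ^ 2) ^ α) m := by
  obtain ⟨hm0, hm1⟩ := hm
  set a : ℝ := m / 2 with ha
  set b : ℝ := (m + 1) / 2 with hb
  have ha0 : 0 < a := by rw [ha]; linarith
  have ham : a < m := by rw [ha]; linarith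
  have hmb : m < b := by rw [hb]; linarith
  have hb1 : b < 1 := by rw [hb]; linarith
  set s : Set ℝ := Set.Ioo a b with hsdef
  have hs : IsOpen s := isOpen_Ioo
  set f : ℕ → ℝ → ℝ := fun k y =>
    gBinom α k * (-1) ^ k * y ^ (p - 2 * α - 2 + 2 * (k : ℝ)) / (p - 2 * α - 2 + 2 * k)
    with hfdef
  set f' : ℕ → ℝ → ℝ := fun k y =>
    gBinom α k * (-1) ^ k * y ^ (p - 2 * α - 3 + 2 * (k : ℝ)) with hf'def
  have hys : ∀ y ∈ s, 0 < y ∧ y < 1 := fun y hy => ⟨lt_trans ha0 hy.1, lt_trans hy.2 hb1⟩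
  have hderiv : ∀ k, ∀ y ∈ s, HasDerivAt (f k) (f' k y) y := by
    intro k y hy
    obtain ⟨hy0, hy1⟩ := hys y hy
    have hk0 : (0:ℝ) ≤ (k:ℝ) := Nat.cast_nonneg k
    have hq0 : 0 < p - 2 * α - 2 + 2 * (k : ℝ) := by linarith
    have h1 : HasDerivAt (fun z : ℝ => z ^ (p - 2 * α - 2 + 2 * (k : ℝ)))
        ((p - 2 * α - 2 + 2 * (k : ℝ)) * y ^ (p - 2 * α - 2 + 2 * (k : ℝ) - 1)) y :=
      Real.hasDerivAt_rpow_const (Or.inl hy0.ne')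
    have h2 := (h1.div_const (p - 2 * α - 2 + 2 * (k : ℝ))).const_mul (gBinom α k * (-1) ^ k)
    simp only [hfdef, hf'def]
    have hexp : p - 2 * α - 3 + 2 * (k:ℝ) = p - 2 * α - 2 + 2 * (k : ℝ) - 1 := by ring
    rw [hexp]
    have hfun : (fun z : ℝ => gBinom α k * (-1) ^ k * z ^ (p - 2 * α - 2 + 2 * (k:ℝ)) /
        (p - 2 * α - 2 + 2 * (k:ℝ)))
        = fun z : ℝ => gBinom α k * (-1) ^ k * (z ^ (p - 2 * α - 2 + 2 * (k:ℝ)) /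
            (p - 2 * α - 2 + 2 * (k:ℝ))) := by
      funext z
      ring
    rw [hfun]
    refine h2.congr_deriv ?_
    field_simp
  have hu : Summable (fun k => |gBinom α k| / a) := (summable_abs_gBinom hα).div_const a
  have hbound : ∀ k, ∀ y ∈ s, |f' k y| ≤ |gBinom α k| / a := by
    intro k y hy
    obtain ⟨hy0, hy1⟩ := hys y hy
    have hk0 : (0:ℝ) ≤ (k:ℝ) := Nat.cast_nonneg k
    have hq0 : (0:ℝ) ≤ p - 2 * α - 2 + 2 * (k:ℝ) := by linarith
    have h1 : y ^ (p - 2 * α - 3 + 2 * (k : ℝ)) ≤ 1 / a := by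
      have hexp : p - 2 * α - 3 + 2 * (k : ℝ) = (p - 2 * α - 2 + 2 * (k:ℝ)) - 1 := by ring
      rw [hexp, Real.rpow_sub hy0, Real.rpow_one]
      have h2 : y ^ (p - 2 * α - 2 + 2 * (k:ℝ)) ≤ 1 := Real.rpow_le_one hy0.le hy1.le hq0
      exact div_le_div₀ zero_le_one h2 ha0 hy.1.le
    have h5 : |f' k y| = |gBinom α k| * y ^ (p - 2 * α - 3 + 2 * (k : ℝ)) := by
      simp only [hf'def]
      rw [abs_mul, abs_mul, abs_pow, abs_neg, abs_one, one_pow, mul_one,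
        abs_of_nonneg (Real.rpow_nonneg hy0.le _)]
    rw [h5]
    calc |gBinom α k| * y ^ (p - 2 * α - 3 + 2 * (k : ℝ))
        ≤ |gBinom α k| * (1 / a) := mul_le_mul_of_nonneg_left h1 (abs_nonneg _)
      _ = |gBinom α k| / a := by ring
  have hsum : ∀ y ∈ s, Summable (fun k => f k y) := by
    intro y hy
    obtain ⟨hy0, hy1⟩ := hys y hy
    simpa only [hfdef] using summable_V hα he hy0 hy1.le
  have hmain := hasDerivAt_tsum_on hs hu hderiv hbound hsum
    (show m ∈ s from ⟨ham, hmb⟩)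
  have hVeq : Vfun α p = fun y => ∑' k, f k y := by
    funext y
    simp only [hfdef, Vfun]
  have hbin := hasSum_binomial hα (x := m ^ 2) (by positivity) (by nlinarith)
  have hmul := hbin.mul_left (m ^ (p - 2 * α - 3))
  have heq : ∀ k : ℕ,
      m ^ (p - 2 * α - 3) * (gBinom α k * (-1) ^ k * (m ^ 2) ^ k) = f' k m := by
    intro k
    simp only [hf'def]
    have h1 : (m ^ 2) ^ k = m ^ (2 * (k : ℝ)) := by
      rw [← pow_mul, ← Real.rpow_natCast m (2 * k)]
      push_cast
      ring_nf
    rw [h1, Real.rpow_add hm0]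
    ring
  have hfinal : HasSum (fun k => f' k m) (m ^ (p - 2 * α - 3) * (1 - m ^ 2) ^ α) := by
    have h2 := hmul
    rwa [funext heq] at h2
  rw [hVeq, ← hfinal.tsum_eq]
  exact hmain

lemma psi_nonneg (α p : ℝ) {t : ℝ} (h0 : 0 ≤ t) (h1 : t ≤ 1) : 0 ≤ psiFn α p t :=
  mul_nonneg (Real.rpow_nonneg h0 _) (Real.rpow_nonneg (by linarith) _)

lemma psi_continuousOn (α p : ℝ) : ContinuousOn (psiFn α p) (Set.Ioo 0 1) := by
  intro t ht
  have h1 : ContinuousAt (fun v : ℝ => v ^ ((2 + α) / p - 1)) t :=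
    Real.continuousAt_rpow_const t _ (Or.inl ht.1.ne')
  have h2 : ContinuousAt (fun v : ℝ => (1 - v) ^ (-((2 + α) / p))) t := by
    have hc : ContinuousAt (fun v : ℝ => 1 - v) t :=
      (continuous_const.sub continuous_id).continuousAt
    exact hc.rpow_const (Or.inl (ne_of_gt (by linarith [ht.2] : (0:ℝ) < 1 - t)))
  have hpsi : psiFn α p = fun v => v ^ ((2 + α) / p - 1) * (1 - v) ^ (-((2 + α) / p)) := rfl
  rw [hpsi]
  exact (h1.mul h2).continuousWithinAt

lemma psi_intervalIntegrable {α p : ℝ} (hc0 : 0 < (2 + α) / p) (hc1 : (2 + α) / p < 1) :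
    IntervalIntegrable (psiFn α p) volume 0 1 := by
  have hpsi : psiFn α p = fun t => t ^ ((2 + α) / p - 1) * (1 - t) ^ (-((2 + α) / p)) := rfl
  have h1 : IntervalIntegrable (psiFn α p) volume 0 (1/2) := by
    rw [hpsi]
    refine IntervalIntegrable.mul_continuousOn
      (intervalIntegral.intervalIntegrable_rpow' (by linarith)) ?_
    intro t ht
    rw [Set.uIcc_of_le (by norm_num : (0:ℝ) ≤ 1/2)] at ht
    have h2 : (1:ℝ) - t ≠ 0 := by
      have := ht.2
      intro hcontr
      have ht1 : t = 1 := by linarith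
      rw [ht1] at this
      norm_num at this
    exact (((continuous_const.sub continuous_id).continuousAt).rpow_const
      (Or.inl h2)).continuousWithinAt
  have h2 : IntervalIntegrable (psiFn α p) volume (1/2) 1 := by
    have base : IntervalIntegrable (fun t : ℝ => t ^ (-((2 + α) / p))) volume 0 (1/2) :=
      intervalIntegral.intervalIntegrable_rpow' (by linarith)
    have h3 := base.comp_sub_left 1
    have h3' : IntervalIntegrable (fun x : ℝ => (1 - x) ^ (-((2 + α) / p))) volume (1/2) 1 := by
      have h4 := h3.symm
      have he1 : (1:ℝ) - 0 = 1 := by norm_num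
      have he2 : (1:ℝ) - 1/2 = 1/2 := by norm_num
      rw [he1, he2] at h4
      exact h4
    have hcont : ContinuousOn (fun t : ℝ => t ^ ((2 + α) / p - 1)) (Set.uIcc (1/2 : ℝ) 1) := by
      intro t ht
      rw [Set.uIcc_of_le (by norm_num : (1:ℝ)/2 ≤ 1)] at ht
      have ht0 : t ≠ 0 := by
        have := ht.1
        intro hcontr
        rw [hcontr] at this
        norm_num at this
      exact (Real.continuousAt_rpow_const t _ (Or.inl ht0)).continuousWithinAt
    have h4 := h3'.mul_continuousOn hcont
    rw [hpsi]
    have h5 : (fun t : ℝ => (1 - t) ^ (-((2 + α) / p)) * t ^ ((2 + α) / p - 1))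
        = fun t : ℝ => t ^ ((2 + α) / p - 1) * (1 - t) ^ (-((2 + α) / p)) := by
      funext t
      ring
    rwa [h5] at h4
  exact h1.trans h2

lemma psiV_continuousOn {α p : ℝ} (hα : 0 ≤ α) (he : 0 < p - 2 * α - 2) :
    ContinuousOn (fun t => psiFn α p t * Vfun α p (t ^ 2)) (Set.Ioo 0 1) := by
  intro t ht
  have h2 : t ^ 2 ∈ Set.Ioo (0:ℝ) 1 := ⟨pow_pos ht.1 2, by nlinarith [ht.1, ht.2]⟩
  have hV : ContinuousAt (fun v : ℝ => Vfun α p (v ^ 2)) t := by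
    have hsq : HasDerivAt (fun v : ℝ => v ^ 2) (2 * t) t := by
      simpa using hasDerivAt_pow 2 t
    have houter : HasDerivAt (Vfun α p)
        ((t ^ 2) ^ (p - 2 * α - 3) * (1 - (t ^ 2) ^ 2) ^ α) ((fun v : ℝ => v ^ 2) t) :=
      hasDerivAt_Vfun hα he h2
    exact (HasDerivAt.comp (h := fun v : ℝ => v ^ 2) t houter hsq).continuousAt
  exact (psi_continuousOn α p t ht).mul hV.continuousWithinAt

lemma psiV_intervalIntegrable {α p : ℝ} (hα : 0 ≤ α) (he : 0 < p - 2 * α - 2)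
    (hc0 : 0 < (2 + α) / p) (hc1 : (2 + α) / p < 1) :
    IntervalIntegrable (fun t => psiFn α p t * Vfun α p (t ^ 2)) volume 0 1 := by
  set M := (∑' k, |gBinom α k|) / (p - 2 * α - 2) with hM
  have hM0 : 0 ≤ M := div_nonneg (tsum_nonneg fun k => abs_nonneg _) he.le
  rw [intervalIntegrable_iff, Set.uIoc_of_le zero_le_one,
    integrableOn_Ioc_iff_integrableOn_Ioo]
  have hψ : IntegrableOn (psiFn α p) (Set.Ioo 0 1) volume := by
    have h1 := psi_intervalIntegrable hc0 hc1
    rw [intervalIntegrable_iff, Set.uIoc_of_le zero_le_one] at h1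
    exact h1.mono_set Set.Ioo_subset_Ioc_self
  have hMψ : IntegrableOn (fun t => M * psiFn α p t) (Set.Ioo 0 1) volume := hψ.const_mul M
  refine MeasureTheory.Integrable.mono hMψ
    ((psiV_continuousOn hα he).aestronglyMeasurable measurableSet_Ioo) ?_
  rw [MeasureTheory.ae_restrict_iff' measurableSet_Ioo]
  refine Filter.Eventually.of_forall fun t ht => ?_
  have h2 : (0:ℝ) < t ^ 2 := pow_pos ht.1 2
  have h21 : t ^ 2 ≤ 1 := by nlinarith [ht.1, ht.2]
  have hb := abs_Vfun_le hα he h2 h21 (p := p)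
  rw [← hM] at hb
  have hψ0 : 0 ≤ psiFn α p t := psi_nonneg α p ht.1.le ht.2.le
  rw [Real.norm_eq_abs, Real.norm_eq_abs, abs_mul, abs_of_nonneg hψ0,
    abs_of_nonneg (mul_nonneg hM0 hψ0)]
  calc psiFn α p t * |Vfun α p (t ^ 2)| ≤ psiFn α p t * M :=
      mul_le_mul_of_nonneg_left hb hψ0
    _ = M * psiFn α p t := mul_comm _ _

lemma integral_repr {α p : ℝ} (hα : 0 ≤ α) (he : 0 < p - 2 * α - 2)
    (hc0 : 0 < (2 + α) / p) (hc1 : (2 + α) / p < 1) {u : ℝ} (hu : u ∈ Set.Ioo (0:ℝ) 1) :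
    (∫ t in (0:ℝ)..1, psiFn α p t * Kfun α p u t)
      = (∫ t in (0:ℝ)..u, psiFn α p t) * Vfun α p (u ^ 2)
        + ((∫ t in (0:ℝ)..1, psiFn α p t * Vfun α p (t ^ 2))
            - ∫ t in (0:ℝ)..u, psiFn α p t * Vfun α p (t ^ 2)) := by
  obtain ⟨hu0, hu1⟩ := hu
  have hK1 : Set.EqOn (fun t => psiFn α p t * Kfun α p u t)
      (fun t => psiFn α p t * Vfun α p (u ^ 2)) (Set.uIcc 0 u) := by
    intro t ht
    rw [Set.uIcc_of_le hu0.le] at ht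
    have hmax : max (u ^ 2) (t ^ 2) = u ^ 2 :=
      max_eq_left (by nlinarith [ht.1, ht.2])
    simp only [Kfun_eq_Vfun, hmax]
  have hK2 : Set.EqOn (fun t => psiFn α p t * Kfun α p u t)
      (fun t => psiFn α p t * Vfun α p (t ^ 2)) (Set.uIcc u 1) := by
    intro t ht
    rw [Set.uIcc_of_le hu1.le] at ht
    have hmax : max (u ^ 2) (t ^ 2) = t ^ 2 :=
      max_eq_right (by nlinarith [ht.1, hu0])
    simp only [Kfun_eq_Vfun, hmax]
  have hmemu : u ∈ Set.uIcc (0:ℝ) 1 := by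
    rw [Set.uIcc_of_le zero_le_one]
    exact ⟨hu0.le, hu1.le⟩
  have hψu : IntervalIntegrable (psiFn α p) volume 0 u :=
    (psi_intervalIntegrable hc0 hc1).mono_set
      (Set.uIcc_subset_uIcc Set.left_mem_uIcc hmemu)
  have hψVfull := psiV_intervalIntegrable hα he hc0 hc1
  have hψVu : IntervalIntegrable (fun t => psiFn α p t * Vfun α p (t ^ 2)) volume 0 u :=
    hψVfull.mono_set (Set.uIcc_subset_uIcc Set.left_mem_uIcc hmemu)
  have hψVu1 : IntervalIntegrable (fun t => psiFn α p t * Vfun α p (t ^ 2)) volume u 1 :=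
    hψVfull.mono_set (Set.uIcc_subset_uIcc hmemu Set.right_mem_uIcc)
  have hI1 : IntervalIntegrable (fun t => psiFn α p t * Kfun α p u t) volume 0 u := by
    rw [intervalIntegrable_iff]
    have hbase : IntegrableOn (fun t => psiFn α p t * Vfun α p (u ^ 2)) (Set.uIoc 0 u) volume := by
      rw [← intervalIntegrable_iff]
      exact hψu.mul_const _
    exact hbase.congr_fun (fun t ht => (hK1 (Set.uIoc_subset_uIcc ht)).symm) measurableSet_uIoc
  have hI2 : IntervalIntegrable (fun t => psiFn α p t * Kfun α p u t) volume u 1 := by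
    rw [intervalIntegrable_iff]
    have hbase : IntegrableOn (fun t => psiFn α p t * Vfun α p (t ^ 2)) (Set.uIoc u 1) volume := by
      rw [← intervalIntegrable_iff]
      exact hψVu1
    exact hbase.congr_fun (fun t ht => (hK2 (Set.uIoc_subset_uIcc ht)).symm) measurableSet_uIoc
  have hsplit := intervalIntegral.integral_add_adjacent_intervals hI1 hI2
  have hsplit2 := intervalIntegral.integral_add_adjacent_intervals hψVu hψVu1
  have e1 : (∫ t in (0:ℝ)..u, psiFn α p t * Kfun α p u t)
      = (∫ t in (0:ℝ)..u, psiFn α p t) * Vfun α p (u ^ 2) := by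
    rw [intervalIntegral.integral_congr hK1]
    exact intervalIntegral.integral_mul_const _ _
  have e2 : (∫ t in u..(1:ℝ), psiFn α p t * Kfun α p u t)
      = ∫ t in u..(1:ℝ), psiFn α p t * Vfun α p (t ^ 2) :=
    intervalIntegral.integral_congr hK2
  rw [← hsplit, e1, e2]
  have e3 : (∫ t in u..(1:ℝ), psiFn α p t * Vfun α p (t ^ 2))
      = (∫ t in (0:ℝ)..1, psiFn α p t * Vfun α p (t ^ 2))
        - ∫ t in (0:ℝ)..u, psiFn α p t * Vfun α p (t ^ 2) := by
    rw [← hsplit2]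
    ring
  rw [e3]

end AuxHasDerivAtF

theorem hasDerivAt_F (α p : ℝ) (hα : 0 ≤ α)
    (hp1 : 2 + 2 * α < p) (hp2 : p < 2 * (2 + α)) (s : ℝ) (hs : s ∈ Set.Ioo (0:ℝ) 1) :
    HasDerivAt (fun u : ℝ => betaFn ((2 + α) / p) (1 - (2 + α) / p) * Hfun α p u
        - ∫ t in (0:ℝ)..1, psiFn α p t * Kfun α p u t)
      (2 * s ^ (2 * p - 4 * α - 5) * (1 - s ^ 4) ^ α *
        (s ^ (8 + 4 * α - 2 * p) * betaFn ((2 + α) / p) (1 - (2 + α) / p)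
          - ∫ t in (0:ℝ)..s, psiFn α p t)) s := by
  obtain ⟨hs0, hs1⟩ := hs
  have hmem : s ∈ Set.Ioo (0:ℝ) 1 := ⟨hs0, hs1⟩
  have hα1 : (0:ℝ) < α + 1 := by linarith
  have hp0 : (0:ℝ) < p := by linarith
  have he : 0 < p - 2 * α - 2 := by linarith
  have hc0 : 0 < (2 + α) / p := by positivity
  have hc1 : (2 + α) / p < 1 := (div_lt_one hp0).2 (by linarith)
  have hs4 : s ^ 4 < 1 := pow_lt_one₀ hs0.le hs1 (by norm_num)
  have hs4' : (0:ℝ) < 1 - s ^ 4 := by linarith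
  set B := betaFn ((2 + α) / p) (1 - (2 + α) / p) with hB
  -- derivative of Hfun
  have h4 : HasDerivAt (fun u : ℝ => 1 - u ^ 4) (-(4 * s ^ 3)) s := by
    have h := (hasDerivAt_pow 4 s).const_sub 1
    norm_num at h
    exact h
  have h5 := h4.rpow_const (p := α + 1) (Or.inl hs4'.ne')
  have hH : HasDerivAt (Hfun α p) (2 * s ^ 3 * (1 - s ^ 4) ^ α) s := by
    have h6 := (h5.const_mul (1 / (2 * (α + 1)))).const_sub
      (∑' k : ℕ, gBinom α k * (-1) ^ k / (p - 2 * α - 2 + 2 * k))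
    have h7 : Hfun α p = fun u =>
        (∑' k : ℕ, gBinom α k * (-1) ^ k / (p - 2 * α - 2 + 2 * k))
          - 1 / (2 * (α + 1)) * (1 - u ^ 4) ^ (α + 1) := rfl
    rw [h7]
    refine h6.congr_deriv ?_
    rw [show α + 1 - 1 = α by ring]
    field_simp
    ring
  -- derivative of the primitive of ψ
  have hψII : IntervalIntegrable (psiFn α p) volume 0 1 := psi_intervalIntegrable hc0 hc1
  have hsmem : s ∈ Set.uIcc (0:ℝ) 1 := by
    rw [Set.uIcc_of_le zero_le_one]
    exact ⟨hs0.le, hs1.le⟩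
  have hsubs : Set.uIcc (0:ℝ) s ⊆ Set.uIcc (0:ℝ) 1 :=
    Set.uIcc_subset_uIcc Set.left_mem_uIcc hsmem
  have hΦ : HasDerivAt (fun u => ∫ t in (0:ℝ)..u, psiFn α p t) (psiFn α p s) s :=
    intervalIntegral.integral_hasDerivAt_right (hψII.mono_set hsubs)
      (ContinuousOn.stronglyMeasurableAtFilter isOpen_Ioo (psi_continuousOn α p) s hmem)
      ((psi_continuousOn α p s hmem).continuousAt (isOpen_Ioo.mem_nhds hmem))
  -- derivative of u ↦ Vfun (u²)
  have hVs : HasDerivAt (fun u : ℝ => Vfun α p (u ^ 2))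
      (2 * s ^ (2 * p - 4 * α - 5) * (1 - s ^ 4) ^ α) s := by
    have hmem2 : s ^ 2 ∈ Set.Ioo (0:ℝ) 1 := ⟨pow_pos hs0 2, by nlinarith⟩
    have hsq : HasDerivAt (fun v : ℝ => v ^ 2) (2 * s) s := by
      simpa using hasDerivAt_pow 2 s
    have houter : HasDerivAt (Vfun α p)
        ((s ^ 2) ^ (p - 2 * α - 3) * (1 - (s ^ 2) ^ 2) ^ α) ((fun v : ℝ => v ^ 2) s) :=
      hasDerivAt_Vfun hα he hmem2
    have hcomp := HasDerivAt.comp (h := fun v : ℝ => v ^ 2) s houter hsq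
    have hcomp' : HasDerivAt (fun u : ℝ => Vfun α p (u ^ 2))
        ((s ^ 2) ^ (p - 2 * α - 3) * (1 - (s ^ 2) ^ 2) ^ α * (2 * s)) s := hcomp
    convert hcomp' using 1
    have h1 : ((s:ℝ) ^ 2) ^ (p - 2 * α - 3) = s ^ (2 * p - 4 * α - 6) := by
      rw [← Real.rpow_natCast s 2, ← Real.rpow_mul hs0.le]
      rw [show ((2:ℕ):ℝ) * (p - 2 * α - 3) = 2 * p - 4 * α - 6 by push_cast; ring]
    have h2 : ((s:ℝ) ^ 2) ^ 2 = s ^ 4 := by ring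
    rw [h1, h2, show (2:ℝ) * p - 4 * α - 5 = 2 * p - 4 * α - 6 + 1 by ring,
      Real.rpow_add_one hs0.ne']
    ring
  -- derivative of the primitive of ψ·V
  have hΘ : HasDerivAt (fun u => ∫ t in (0:ℝ)..u, psiFn α p t * Vfun α p (t ^ 2))
      (psiFn α p s * Vfun α p (s ^ 2)) s :=
    intervalIntegral.integral_hasDerivAt_right
      ((psiV_intervalIntegrable hα he hc0 hc1).mono_set hsubs)
      (ContinuousOn.stronglyMeasurableAtFilter isOpen_Ioo (psiV_continuousOn hα he) s hmem)
      ((psiV_continuousOn hα he s hmem).continuousAt (isOpen_Ioo.mem_nhds hmem))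
  set C1 := ∫ t in (0:ℝ)..1, psiFn α p t * Vfun α p (t ^ 2) with hC1
  have hprod := hΦ.mul hVs
  have hrest := hΘ.const_sub C1
  have hG := hprod.add hrest
  have hmain := (hH.const_mul B).sub hG
  have hev : (fun u : ℝ => B * Hfun α p u - ∫ t in (0:ℝ)..1, psiFn α p t * Kfun α p u t)
      =ᶠ[nhds s] (fun u => B * Hfun α p u -
        ((∫ t in (0:ℝ)..u, psiFn α p t) * Vfun α p (u ^ 2)
          + (C1 - ∫ t in (0:ℝ)..u, psiFn α p t * Vfun α p (t ^ 2)))) := by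
    refine Filter.eventuallyEq_of_mem (isOpen_Ioo.mem_nhds hmem) fun y hy => ?_
    rw [integral_repr hα he hc0 hc1 hy]
  have hfinal := hmain.congr_of_eventuallyEq hev
  refine hfinal.congr_deriv ?_
  have hss : s ^ (2 * p - 4 * α - 5) * s ^ (8 + 4 * α - 2 * p) = s ^ (3:ℕ) := by
    rw [← Real.rpow_add hs0,
      show (2 * p - 4 * α - 5) + (8 + 4 * α - 2 * p) = ((3:ℕ):ℝ) by push_cast; ring,
      Real.rpow_natCast]
  linear_combination (-(2 * (1 - s ^ 4) ^ α * B)) * hss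
end
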